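/- arXiv:2307.09453 — 3 statements merged into one kernel-verified Lean document; each statement's English description precedes it below -/
import Mathlib

section
/- Let N ≥ 3 be odd, (S,E) the cycle of length N, and fix an edge ee in E. For every B in phi with supp(B) ∩ ee ≠ ∅ there is a unique I in B with |I ∩ ee| = 1 (call it I_B); defining B^! = B∖{I_B} if n_B is odd and B^! = B if n_B is even, the map B ↦ B^! is injective on phi; hence it is a bijection from phi onto omega := {B^! : B in phi}. -/
/-- The induced subgraph of `adj` on `I` is a path (type `A_m`, `m ≥ 1`):
there is an injective enumeration `f : Fin (m+1) → S` of `I` such that two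
elements of `I` are adjacent iff they are consecutive in the enumeration. -/
def IsPathOn {S : Type} [DecidableEq S] (adj : S → S → Prop) (I : Finset S) : Prop :=
  ∃ (m : ℕ) (f : Fin (m + 1) → S), Function.Injective f ∧
    I = Finset.image f Finset.univ ∧
    ∀ i j : Fin (m + 1), adj (f i) (f j) ↔ ((i : ℕ) + 1 = (j : ℕ) ∨ (j : ℕ) + 1 = (i : ℕ))

/-- The induced subgraph of `adj` on `I` is connected. -/
def ConnOn {S : Type} (adj : S → S → Prop) (I : Finset S) : Prop :=
  ∀ s ∈ I, ∀ t ∈ I, Relation.ReflTransGen (fun a b => a ∈ I ∧ b ∈ I ∧ adj a b) s t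

/-- `I ∈ Cal_I^1`: the induced subgraph on `I` is a path and `|I|` is odd. -/
def CalI1 {S : Type} [DecidableEq S] (adj : S → S → Prop) (I : Finset S) : Prop :=
  IsPathOn adj I ∧ Odd I.card

/-- `I ≺ I'`. -/
def Prec {S : Type} [DecidableEq S] (adj : S → S → Prop) (I I' : Finset S) : Prop :=
  I ⊂ I' ∧ ¬ ConnOn adj (I' \ I)

/-- `I ♠ I'`. -/
def Spade {S : Type} [DecidableEq S] (adj : S → S → Prop) (I I' : Finset S) : Prop :=
  I ∩ I' = ∅ ∧ ¬ ConnOn adj (I ∪ I')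

/-- `I^{ev}`: the set of `s ∈ I` such that `I ∖ {s}` is the disjoint union of
`I', I'' ∈ Cal_I^1` with `I' ♠ I''`. -/
def Iev {S : Type} [DecidableEq S] (adj : S → S → Prop) (I : Finset S) : Set S :=
  {s | s ∈ I ∧ ∃ I' I'' : Finset S, CalI1 adj I' ∧ CalI1 adj I'' ∧
    Spade adj I' I'' ∧ I.erase s = I' ∪ I''}

/-- Property (P0). -/
def P0 {S : Type} [DecidableEq S] (adj : S → S → Prop) (B : Finset (Finset S)) : Prop :=
  ∀ I ∈ B, ∀ I' ∈ B, I = I' ∨ Spade adj I I' ∨ Prec adj I I' ∨ Prec adj I' I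

/-- Property (P1). -/
def P1 {S : Type} [DecidableEq S] (adj : S → S → Prop) (B : Finset (Finset S)) : Prop :=
  ∀ I ∈ B, ∃ (k : ℕ) (f : Fin k → Finset S),
    (∀ j, f j ∈ B ∧ Prec adj (f j) I) ∧
    (∀ j j', j ≠ j' → Disjoint (f j) (f j')) ∧
    Iev adj I ⊆ ⋃ j, ((f j : Finset S) : Set S)

/-- `phi`: finite sets `B` of elements of `Cal_I^1` satisfying (P0) and (P1). -/
def phiSet {S : Type} [DecidableEq S] (adj : S → S → Prop) : Set (Finset (Finset S)) :=
  {B | (∀ I ∈ B, CalI1 adj I) ∧ P0 adj B ∧ P1 adj B}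

/-- `supp(B)`. -/
def suppB {S : Type} [DecidableEq S] (B : Finset (Finset S)) : Finset S := B.biUnion id

/-- `g_s(B)`. -/
def gs {S : Type} [DecidableEq S] (B : Finset (Finset S)) (s : S) : ℕ :=
  (B.filter (fun I => s ∈ I)).card

/-- `e_I = ∑_{s ∈ I} e_s`. -/
def eSum {S : Type} {V : Type} [AddCommGroup V] [Module (ZMod 2) V]
    (e : S → V) (I : Finset S) : V := ∑ s ∈ I, e s

/-- `L_B`: the `F`-span of `{e_I : I ∈ B}`. -/
def LB {S : Type} {V : Type} [AddCommGroup V] [Module (ZMod 2) V]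
    (e : S → V) (B : Finset (Finset S)) : Submodule (ZMod 2) V :=
  Submodule.span (ZMod 2) ((fun I => eSum e I) '' (B : Set (Finset S)))

/-- `eps(B) = ∑_{s ∈ S} ((g_s(B)(g_s(B)+1)/2) mod 2) e_s`. -/
def epsB {S : Type} [DecidableEq S] [Fintype S] {V : Type} [AddCommGroup V]
    [Module (ZMod 2) V] (e : S → V) (B : Finset (Finset S)) : V :=
  ∑ s : S, ((gs B s * (gs B s + 1) / 2 : ℕ) : ZMod 2) • e s

/-- The triple `(V, <,>, e)` (with graph `adj`) is perfect. -/
def IsPerfect {S : Type} [DecidableEq S] [Fintype S] {V : Type} [AddCommGroup V]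
    [Module (ZMod 2) V] (adj : S → S → Prop) (e : S → V) : Prop :=
  (∀ B ∈ phiSet adj,
      (LinearIndependent (ZMod 2) (fun I : {I : Finset S // I ∈ B} => eSum e I.1)) ∧
      (∀ I : Finset S, CalI1 adj I → (eSum e I ∈ LB e B ↔ I ∈ B))) ∧
  (∀ B ∈ phiSet adj, epsB e B ∈ LB e B) ∧
  Set.BijOn (epsB e) (phiSet adj) (⋃ B ∈ phiSet adj, ((LB e B : Submodule (ZMod 2) V) : Set V)) ∧
  (∀ B ∈ phiSet adj, ∀ B' ∈ phiSet adj, epsB e B' ∈ LB e B → ∀ s : S, gs B' s ≤ gs B s)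
/-- Adjacency of the cycle of length `N` on `S = ZMod N`. -/
def cadj (N : ℕ) (i j : ZMod N) : Prop := j = i + 1 ∨ i = j + 1

/-- `V = F^S` for `S = ZMod N`. -/
abbrev Vc (N : ℕ) := ZMod N → ZMod 2

/-- The standard basis vector `e_s`. -/
def eVec (N : ℕ) (s : ZMod N) : Vc N := Pi.single s 1

/-- The line `F·e_S`, where `e_S = ∑_{s ∈ S} e_s`. -/
def radN (N : ℕ) [NeZero N] : Submodule (ZMod 2) (Vc N) :=
  Submodule.span (ZMod 2) {eSum (eVec N) Finset.univ}

/-- `Vbar = V / (F·e_S)`. -/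
abbrev VbarN (N : ℕ) [NeZero N] := Vc N ⧸ radN N

/-- The quotient map `pi : V → Vbar`. -/
def piQ (N : ℕ) [NeZero N] : Vc N →ₗ[ZMod 2] VbarN N := (radN N).mkQ

/-- `ebar_s = pi(e_s)`. -/
def ebar (N : ℕ) [NeZero N] (s : ZMod N) : VbarN N := piQ N (eVec N s)
open scoped Classical in
/-- The connected component of `s` in the induced subgraph of `adj` on `I`. -/
noncomputable def compOf {S : Type} [DecidableEq S] (adj : S → S → Prop)
    (I : Finset S) (s : S) : Finset S :=
  I.filter (fun t => Relation.ReflTransGen (fun a b => a ∈ I ∧ b ∈ I ∧ adj a b) s t)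

/-- `c(I)`: the set of vertex sets of connected components of the induced subgraph on `I`. -/
noncomputable def comps {S : Type} [DecidableEq S] (adj : S → S → Prop)
    (I : Finset S) : Finset (Finset S) :=
  I.image (compOf adj I)

/-- `|c^0(I)|`: the number of connected components of even cardinality. -/
noncomputable def c0card {S : Type} [DecidableEq S] (adj : S → S → Prop)
    (I : Finset S) : ℕ :=
  ((comps adj I).filter (fun C => Even C.card)).card

/-- `V_0 = {e_I : I ⊊ S with |c^0(I)| even}`. -/
def V0set (N : ℕ) [NeZero N] : Set (Vc N) :=
  {v | ∃ I : Finset (ZMod N), I ≠ Finset.univ ∧ Even (c0card (cadj N) I) ∧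
    v = eSum (eVec N) I}

/-- `V_1 = {e_S} ∪ {e_I : ∅ ≠ I ⊊ S with |c^0(I)| odd}`. -/
def V1set (N : ℕ) [NeZero N] : Set (Vc N) :=
  {v | v = eSum (eVec N) Finset.univ ∨ ∃ I : Finset (ZMod N), I ≠ ∅ ∧ I ≠ Finset.univ ∧
    Odd (c0card (cadj N) I) ∧ v = eSum (eVec N) I}
open scoped Classical in
/-- `I^{odd} = I ∖ I^{ev}` (as a `Finset`). -/
noncomputable def IoddF {S : Type} [DecidableEq S] (adj : S → S → Prop)
    (I : Finset S) : Finset S :=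
  I.filter (fun s => s ∉ Iev adj I)

/-- `n_B = |{I ∈ B : ee ⊆ I}|`. -/
def nB {S : Type} [DecidableEq S] (ee : Finset S) (B : Finset (Finset S)) : ℕ :=
  (B.filter (fun I => ee ⊆ I)).card

open scoped Classical in
/-- `B ↦ B^!`: remove the unique `I_B ∈ B` with `|I_B ∩ ee| = 1` when `n_B` is odd;
leave `B` unchanged when `n_B` is even. -/
noncomputable def bangF {S : Type} [DecidableEq S] (ee : Finset S)
    (B : Finset (Finset S)) : Finset (Finset S) :=
  if h : Odd (nB ee B) ∧ ∃ I ∈ B, (I ∩ ee).card = 1 then B.erase h.2.choose else B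

/-- `omega = {B^! : B ∈ phi}`. -/
def omegaSet {S : Type} [DecidableEq S] (adj : S → S → Prop) (ee : Finset S) :
    Set (Finset (Finset S)) :=
  (bangF ee) '' (phiSet adj)

open scoped Classical in
/-- `Btilde`: the unique element of `phi` with `Btilde^! = B`. -/
noncomputable def tildeF {S : Type} [DecidableEq S] (adj : S → S → Prop) (ee : Finset S)
    (C : Finset (Finset S)) : Finset (Finset S) :=
  if h : ∃ B ∈ phiSet adj, bangF ee B = C then h.choose else ∅

/-- `'eps(B) = eps(Btilde)`. -/
noncomputable def epsO {S : Type} [DecidableEq S] [Fintype S] {V : Type} [AddCommGroup V]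
    [Module (ZMod 2) V] (adj : S → S → Prop) (ee : Finset S) (e : S → V)
    (C : Finset (Finset S)) : V :=
  epsB e (tildeF adj ee C)

/-- `B' ⪯ B` on `omega`. -/
def preceqO {S : Type} [DecidableEq S] [Fintype S] {V : Type} [AddCommGroup V]
    [Module (ZMod 2) V] (adj : S → S → Prop) (ee : Finset S) (e : S → V)
    (B' B : Finset (Finset S)) : Prop :=
  ∃ (k : ℕ) (c : ℕ → Finset (Finset S)), c 0 = B' ∧ c k = B ∧
    (∀ i ≤ k, c i ∈ omegaSet adj ee) ∧
    (∀ i < k, epsO adj ee e (c i) ∈ LB e (c (i + 1)))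

/-- The linear form `v ↦ v t + v t'` on `V`. -/
def zeeV (N : ℕ) (t t' : ZMod N) : Vc N →ₗ[ZMod 2] ZMod 2 :=
  (LinearMap.proj t : Vc N →ₗ[ZMod 2] ZMod 2) + (LinearMap.proj t' : Vc N →ₗ[ZMod 2] ZMod 2)

/-- `z_ee : Vbar → F`, the linear map with `z_ee(ebar_s) = 1` iff `s ∈ ee = {t,t'}`. -/
noncomputable def zee (N : ℕ) [NeZero N] (t t' : ZMod N) : VbarN N →ₗ[ZMod 2] ZMod 2 :=
  Submodule.liftQ (radN N) (zeeV N t t') (by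
    rw [radN, Submodule.span_le, Set.singleton_subset_iff]
    have h1 : ∀ u : ZMod N, (eSum (eVec N) Finset.univ) u = 1 := by
      intro u
      simp [eSum, eVec, Finset.sum_apply, Finset.sum_pi_single]
    simp only [SetLike.mem_coe, LinearMap.mem_ker, zeeV, LinearMap.add_apply,
      LinearMap.proj_apply, h1]
    decide)
/-- The maximal elements of a finite family of finsets, under inclusion. -/
def maxElts {S : Type} [DecidableEq S] (C : Finset (Finset S)) : Finset (Finset S) :=
  C.filter (fun I => ∀ I' ∈ C, ¬ I ⊂ I')

/-- `restB B k = B ∖ (B_1 ∪ … ∪ B_k)`: what remains of `B` after removing the first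
`k` layers; the `k`-th layer (`k ≥ 1`) is `B_k = maxElts (restB B (k-1))`. -/
def restB {S : Type} [DecidableEq S] (B : Finset (Finset S)) : ℕ → Finset (Finset S)
  | 0 => B
  | k + 1 => restB B k \ maxElts (restB B k)

/-- The relation `B' ≤ B` on `phi(V)`. -/
def lePhi {S : Type} [DecidableEq S] [Fintype S] {V : Type} [AddCommGroup V]
    [Module (ZMod 2) V] (adj : S → S → Prop) (e : S → V)
    (B' B : Finset (Finset S)) : Prop :=
  ∃ (k : ℕ) (c : ℕ → Finset (Finset S)), c 0 = B' ∧ c k = B ∧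
    (∀ i ≤ k, c i ∈ phiSet adj) ∧
    (∀ i < k, epsB e (c i) ∈ LB e (c (i + 1)))
set_option linter.unusedSectionVars false
set_option linter.unusedVariables false

namespace St16

open Finset

variable {N : ℕ} [NeZero N]

def arcF (s : ZMod N) (l : ℕ) : Finset (ZMod N) :=
  (Finset.range l).image fun k : ℕ => s + (k : ZMod N)

lemma mem_arcF {s x : ZMod N} {l : ℕ} :
    x ∈ arcF s l ↔ ∃ k, k < l ∧ x = s + (k : ZMod N) := by
  simp [arcF, eq_comm]

lemma castInj {j k : ℕ} (hj : j < N) (hk : k < N)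
    (h : (j : ZMod N) = (k : ZMod N)) : j = k := by
  have := congrArg ZMod.val h
  rwa [ZMod.val_cast_of_lt hj, ZMod.val_cast_of_lt hk] at this

lemma val_sub_cast {k d : ℕ} (hk : k < N) (hd : d ≤ N) :
    ((k : ZMod N) - (d : ZMod N)).val = if k < d then k + N - d else k - d := by
  have hNpos : 0 < N := Nat.pos_of_ne_zero (NeZero.ne N)
  have h1 : (k : ZMod N) - (d : ZMod N) = ((k + (N - d) : ℕ) : ZMod N) := by
    push_cast [Nat.cast_sub hd]
    rw [ZMod.natCast_self]
    ring
  rw [h1, ZMod.val_natCast]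
  split_ifs with h
  · rw [Nat.mod_eq_of_lt (by omega)]; omega
  · have h2 : k + (N - d) = (k - d) + N := by omega
    rw [h2, Nat.add_mod_right, Nat.mod_eq_of_lt (by omega)]

lemma mem_arc_val {x s : ZMod N} {l : ℕ} (hl : l ≤ N) :
    x ∈ arcF s l ↔ (x - s).val < l := by
  rw [mem_arcF]
  constructor
  · rintro ⟨k, hk, rfl⟩
    have h1 : s + (k : ZMod N) - s = (k : ZMod N) := by ring
    rw [h1, ZMod.val_natCast]
    exact lt_of_le_of_lt (Nat.mod_le k N) hk
  · intro h
    refine ⟨(x - s).val, h, ?_⟩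
    rw [ZMod.natCast_rightInverse (x - s)]
    ring

lemma eq_add_iff_val {x s : ZMod N} {j : ℕ} (hj : j < N) :
    x = s + (j : ZMod N) ↔ (x - s).val = j := by
  constructor
  · rintro rfl
    have h1 : s + (j : ZMod N) - s = (j : ZMod N) := by ring
    rw [h1, ZMod.val_natCast, Nat.mod_eq_of_lt hj]
  · intro h
    have h2 : ((j : ℕ) : ZMod N) = x - s := by rw [← h]; exact ZMod.natCast_rightInverse (x - s)
    rw [h2]; ring

lemma mem_arc_shift {x s : ZMod N} {d m : ℕ} (hd : d ≤ N) (hm : m ≤ N) :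
    x ∈ arcF (s + (d : ZMod N)) m ↔
      (if (x - s).val < d then (x - s).val + N - d else (x - s).val - d) < m := by
  rw [mem_arc_val hm]
  have h1 : x - (s + (d : ZMod N)) = (((x - s).val : ℕ) : ZMod N) - (d : ZMod N) := by
    rw [ZMod.natCast_rightInverse (x - s)]; ring
  rw [h1, val_sub_cast (ZMod.val_lt _) hd]

lemma card_arcF {s : ZMod N} {l : ℕ} (hl : l ≤ N) : (arcF s l).card = l := by
  have hinj : Set.InjOn (fun k : ℕ => s + (k : ZMod N)) (Finset.range l) := by
    intro a ha b hb hab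
    simp only [Finset.coe_range, Set.mem_Iio] at ha hb
    exact castInj (lt_of_lt_of_le ha hl) (lt_of_lt_of_le hb hl) (add_left_cancel hab)
  rw [arcF, Finset.card_image_of_injOn hinj, Finset.card_range]

lemma self_ne_add_one (hN : 3 ≤ N) (t : ZMod N) : t ≠ t + 1 := by
  intro h
  nth_rewrite 1 [← add_zero t] at h
  have h0 : (0 : ZMod N) = 1 := add_left_cancel h
  have h1 : ((0 : ℕ) : ZMod N) = ((1 : ℕ) : ZMod N) := by exact_mod_cast h0
  have := castInj (by omega) (by omega) h1
  omega

lemma sub_one_not_mem {a : ZMod N} {la : ℕ} (hla : la ≤ N - 1) : a - 1 ∉ arcF a la := by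
  rintro hmem
  obtain ⟨k, hk, heq⟩ := mem_arcF.1 hmem
  have hN1 : 1 ≤ N := Nat.one_le_iff_ne_zero.2 (NeZero.ne N)
  have h1 : ((k : ℕ) : ZMod N) = ((N - 1 : ℕ) : ZMod N) := by
    have h2 : (k : ZMod N) = -1 := by
      have h3 : a + (-1 : ZMod N) = a + (k : ZMod N) := by rw [← sub_eq_add_neg]; exact heq
      exact (add_left_cancel h3).symm
    rw [h2, Nat.cast_sub hN1, ZMod.natCast_self, Nat.cast_one]; ring
  have := castInj (by omega) (by omega) h1
  omega

lemma add_len_not_mem {a : ZMod N} {la : ℕ} (hla : la ≤ N - 1) :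
    a + (la : ZMod N) ∉ arcF a la := by
  intro hmem
  obtain ⟨k, hk, heq⟩ := mem_arcF.1 hmem
  have := castInj (k := k) (by omega) (by omega) (add_left_cancel heq)
  omega

end St16
namespace St16

open Finset

variable {N : ℕ} [NeZero N]

lemma connOn_arcF (s : ZMod N) (l : ℕ) : ConnOn (cadj N) (arcF s l) := by
  set rel := fun a b : ZMod N => a ∈ arcF s l ∧ b ∈ arcF s l ∧ cadj N a b with hrel
  have key : ∀ k, k < l → Relation.ReflTransGen rel s (s + (k : ZMod N)) := by
    intro k
    induction k with
    | zero => intro _; simp only [Nat.cast_zero, add_zero]; exact Relation.ReflTransGen.refl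
    | succ n ih =>
      intro h
      refine (ih (by omega)).tail ⟨mem_arcF.2 ⟨n, by omega, rfl⟩,
        mem_arcF.2 ⟨n + 1, h, rfl⟩, ?_⟩
      left; push_cast; ring
  have hsymm : Symmetric rel := by
    rintro a b ⟨h1, h2, h3⟩
    exact ⟨h2, h1, Or.symm h3⟩
  intro x hx y hy
  obtain ⟨kx, hkx, rfl⟩ := mem_arcF.1 hx
  obtain ⟨ky, hky, rfl⟩ := mem_arcF.1 hy
  haveI : Std.Symm rel := ⟨fun a b h => hsymm h⟩
  exact (Std.Symm.symm _ _ (key kx hkx)).trans (key ky hky)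

lemma connOn_union {S : Type} [DecidableEq S] {adj : S → S → Prop} {A B : Finset S}
    (hsym : ∀ x y, adj x y → adj y x)
    (hA : ConnOn adj A) (hB : ConnOn adj B) {a0 b0 : S} (ha0 : a0 ∈ A) (hb0 : b0 ∈ B)
    (hadj : adj a0 b0) : ConnOn adj (A ∪ B) := by
  have monoA : ∀ {x y : S}, Relation.ReflTransGen (fun a b => a ∈ A ∧ b ∈ A ∧ adj a b) x y →
      Relation.ReflTransGen (fun a b => a ∈ A ∪ B ∧ b ∈ A ∪ B ∧ adj a b) x y := by
    intro x y h
    refine Relation.ReflTransGen.mono ?_ x y h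
    rintro a b ⟨h1, h2, h3⟩
    exact ⟨Finset.mem_union_left _ h1, Finset.mem_union_left _ h2, h3⟩
  have monoB : ∀ {x y : S}, Relation.ReflTransGen (fun a b => a ∈ B ∧ b ∈ B ∧ adj a b) x y →
      Relation.ReflTransGen (fun a b => a ∈ A ∪ B ∧ b ∈ A ∪ B ∧ adj a b) x y := by
    intro x y h
    refine Relation.ReflTransGen.mono ?_ x y h
    rintro a b ⟨h1, h2, h3⟩
    exact ⟨Finset.mem_union_right _ h1, Finset.mem_union_right _ h2, h3⟩
  have hstep : Relation.ReflTransGen (fun a b => a ∈ A ∪ B ∧ b ∈ A ∪ B ∧ adj a b) a0 b0 :=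
    Relation.ReflTransGen.single
      ⟨Finset.mem_union_left _ ha0, Finset.mem_union_right _ hb0, hadj⟩
  have hstep' : Relation.ReflTransGen (fun a b => a ∈ A ∪ B ∧ b ∈ A ∪ B ∧ adj a b) b0 a0 :=
    Relation.ReflTransGen.single
      ⟨Finset.mem_union_right _ hb0, Finset.mem_union_left _ ha0, hsym _ _ hadj⟩
  intro x hx y hy
  rcases Finset.mem_union.1 hx with hxA | hxB <;> rcases Finset.mem_union.1 hy with hyA | hyB
  · exact monoA (hA x hxA y hyA)
  · exact ((monoA (hA x hxA a0 ha0)).trans hstep).trans (monoB (hB b0 hb0 y hyB))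
  · exact ((monoB (hB x hxB b0 hb0)).trans hstep').trans (monoA (hA a0 ha0 y hyA))
  · exact monoB (hB x hxB y hyB)

lemma not_connOn_split {S : Type} [DecidableEq S] {adj : S → S → Prop} {A B : Finset S}
    (hdisj : ∀ x, x ∈ A → x ∈ B → False)
    (hnadj : ∀ x ∈ A, ∀ y ∈ B, ¬ adj x y ∧ ¬ adj y x)
    {a b : S} (ha : a ∈ A) (hb : b ∈ B) : ¬ ConnOn adj (A ∪ B) := by
  intro h
  have hpath := h a (Finset.mem_union_left _ ha) b (Finset.mem_union_right _ hb)
  have inv : ∀ {y : S},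
      Relation.ReflTransGen (fun u v => u ∈ A ∪ B ∧ v ∈ A ∪ B ∧ adj u v) a y → y ∈ A := by
    intro y hy
    induction hy with
    | refl => exact ha
    | tail _ step ih =>
      rcases Finset.mem_union.1 step.2.1 with h1 | h1
      · exact h1
      · exact absurd step.2.2 (hnadj _ ih _ h1).1
  exact hdisj b (inv hpath) hb

lemma two_ne_zero' (hN : 3 ≤ N) : (2 : ZMod N) ≠ 0 := by
  intro h
  have h1 : ((2 : ℕ) : ZMod N) = ((0 : ℕ) : ZMod N) := by exact_mod_cast h
  have := castInj (by omega) (by omega) h1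
  omega

/-- Classification: every `CalI1` set is an arc of odd length `≤ N - 2`. -/
lemma calI1_arc (hN : 3 ≤ N) (hodd : Odd N) {I : Finset (ZMod N)}
    (hI : CalI1 (cadj N) I) :
    ∃ (a : ZMod N) (l : ℕ), Odd l ∧ 1 ≤ l ∧ l ≤ N - 2 ∧ I = arcF a l := by
  obtain ⟨⟨m, f, hinj, hIeq, hadj⟩, hoddI⟩ := hI
  have hcard : I.card = m + 1 := by
    rw [hIeq, Finset.card_image_of_injective _ hinj, Finset.card_univ, Fintype.card_fin]
  have hoddm : Odd (m + 1) := hcard ▸ hoddI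
  -- existence of direction
  have main : ∃ a : ZMod N, I = arcF a (m + 1) := by
    rcases Nat.eq_zero_or_pos m with hm0 | hmpos
    · subst hm0
      refine ⟨f 0, ?_⟩
      rw [hIeq]
      ext x
      simp only [Finset.mem_image, Finset.mem_univ, true_and, mem_arcF]
      constructor
      · rintro ⟨i, rfl⟩
        have hi0 : i = 0 := Fin.ext (by omega)
        exact ⟨0, by omega, by simp [hi0]⟩
      · rintro ⟨k, hk, rfl⟩
        interval_cases k
        exact ⟨0, by simp⟩
    · -- m ≥ 1
      have h01 : cadj N (f ⟨0, by omega⟩) (f ⟨1, by omega⟩) := by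
        rw [hadj]
        left; simp
      set δ : ZMod N := f ⟨1, by omega⟩ - f ⟨0, by omega⟩ with hδ
      have hδ1 : δ = 1 ∨ δ = -1 := by
        rcases h01 with h | h
        · left; rw [hδ, h]; ring
        · right; rw [hδ, h]; ring
      have hf1 : f ⟨1, by omega⟩ = f ⟨0, by omega⟩ + δ := by rw [hδ]; ring
      have claim : ∀ i : ℕ, ∀ hi : i ≤ m,
          f ⟨i, by omega⟩ = f ⟨0, by omega⟩ + (i : ZMod N) * δ := by
        intro i
        induction i using Nat.strong_induction_on with
        | _ i IH =>
          intro hi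
          match i, hi with
          | 0, _ => simp
          | 1, h1 => simpa using hf1
          | (j+2), hj2 =>
            have hPj1 : f ⟨j+1, by omega⟩ = f ⟨0, by omega⟩ + ((j+1 : ℕ) : ZMod N) * δ :=
              IH (j+1) (by omega) (by omega)
            have hPj : f ⟨j, by omega⟩ = f ⟨0, by omega⟩ + ((j : ℕ) : ZMod N) * δ :=
              IH j (by omega) (by omega)
            have hstep : cadj N (f ⟨j+1, by omega⟩) (f ⟨j+2, by omega⟩) := by
              rw [hadj]; left; simp
            have hcases : f ⟨j+2, by omega⟩ = f ⟨j+1, by omega⟩ + δ ∨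
                f ⟨j+2, by omega⟩ = f ⟨j+1, by omega⟩ - δ := by
              rcases hstep with h | h <;> rcases hδ1 with h1 | h1
              · left; rw [h, h1]
              · right; rw [h, h1]; ring
              · right; rw [h1]; rw [h]; ring
              · left; rw [h1]; rw [h]; ring
            rcases hcases with h | h
            · rw [h, hPj1]; push_cast; ring
            · exfalso
              have : f ⟨j+2, by omega⟩ = f ⟨j, by omega⟩ := by
                rw [h, hPj1, hPj]; push_cast; ring
              have := hinj this
              simp only [Fin.mk.injEq] at this
              omega
      rcases hδ1 with h1 | h1
      · refine ⟨f ⟨0, by omega⟩, ?_⟩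
        rw [hIeq]; ext x
        simp only [Finset.mem_image, Finset.mem_univ, true_and, mem_arcF]
        constructor
        · rintro ⟨i, rfl⟩
          refine ⟨(i : ℕ), i.isLt, ?_⟩
          have := claim i (by omega)
          rw [show (⟨(i : ℕ), by omega⟩ : Fin (m+1)) = i from Fin.ext rfl] at this
          rw [this, h1, mul_one]
        · rintro ⟨k, hk, rfl⟩
          refine ⟨⟨k, hk⟩, ?_⟩
          rw [claim k (by omega), h1, mul_one]
      · refine ⟨f ⟨0, by omega⟩ - (m : ZMod N), ?_⟩
        rw [hIeq]; ext x
        simp only [Finset.mem_image, Finset.mem_univ, true_and, mem_arcF]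
        constructor
        · rintro ⟨i, rfl⟩
          refine ⟨m - (i : ℕ), by omega, ?_⟩
          have := claim i (by omega)
          rw [show (⟨(i : ℕ), by omega⟩ : Fin (m+1)) = i from Fin.ext rfl] at this
          rw [this, h1]
          have hcast : ((m - (i : ℕ) : ℕ) : ZMod N) = (m : ZMod N) - ((i : ℕ) : ZMod N) := by
            rw [Nat.cast_sub (by omega)]
          rw [hcast]; ring
        · rintro ⟨k, hk, rfl⟩
          refine ⟨⟨m - k, by omega⟩, ?_⟩
          rw [claim (m - k) (by omega), h1]
          have hcast : ((m - k : ℕ) : ZMod N) = (m : ZMod N) - (k : ZMod N) := by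
            rw [Nat.cast_sub (by omega)]
          rw [hcast]; ring
  obtain ⟨a, ha⟩ := main
  -- bound m + 1 ≤ N
  have hle : m + 1 ≤ N := by
    have h1 : I.card ≤ N := by
      have := Finset.card_le_card (Finset.subset_univ I)
      rwa [Finset.card_univ, ZMod.card] at this
    omega
  -- m + 1 ≠ N
  have hneq : m + 1 ≠ N := by
    intro hmN
    have hm2 : 2 ≤ m := by omega
    -- f 0 and f m are adjacent in the cycle
    have hfm : f ⟨m, by omega⟩ ∈ I := by
      rw [hIeq]; exact Finset.mem_image_of_mem f (Finset.mem_univ _)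
    have hf0 : f ⟨0, by omega⟩ ∈ I := by
      rw [hIeq]; exact Finset.mem_image_of_mem f (Finset.mem_univ _)
    -- every element of ZMod N is in I, since card I = N
    have hIuniv : I = Finset.univ := by
      apply Finset.eq_univ_of_card
      rw [hcard, hmN, ZMod.card]
    -- in particular f 0 + 1 ∈ I and f 0 + 1 = f i for some i; adjacency gives...
    -- direct: f m and f 0: we know all of ZMod N is covered; consider x := f 0 - 1 and f 0 + 1.
    -- Instead use injectivity/surjectivity: f is bijective onto ZMod N.
    -- for i with f i = f 0 - 1, forcing i = 1 by hadj, and also f j = f 0 + 1 forcing j = 1.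
    have hsurj : ∀ y : ZMod N, ∃ i : Fin (m+1), f i = y := by
      intro y
      have : y ∈ I := hIuniv ▸ Finset.mem_univ y
      rw [hIeq] at this
      obtain ⟨i, _, hi⟩ := Finset.mem_image.1 this
      exact ⟨i, hi⟩
    obtain ⟨i, hi⟩ := hsurj (f ⟨0, by omega⟩ - 1)
    obtain ⟨j, hj⟩ := hsurj (f ⟨0, by omega⟩ + 1)
    have hine : i ≠ j := by
      intro h; rw [h, hj] at hi
      have : (2 : ZMod N) = 0 := by
        have : f ⟨0, by omega⟩ + 1 - (f ⟨0, by omega⟩ - 1) = 0 := by rw [hi]; ring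
        calc (2 : ZMod N) = f ⟨0, by omega⟩ + 1 - (f ⟨0, by omega⟩ - 1) := by ring
        _ = 0 := this
      exact two_ne_zero' hN this
    have hi1 : (i : ℕ) = 1 := by
      have : cadj N (f i) (f ⟨0, by omega⟩) := by
        left; rw [hi]; ring
      rw [hadj] at this
      simp only [Fin.val_mk] at this
      omega
    have hj1 : (j : ℕ) = 1 := by
      have : cadj N (f ⟨0, by omega⟩) (f j) := by
        left; rw [hj]
      rw [hadj] at this
      simp only [Fin.val_mk] at this
      omega
    exact hine (Fin.ext (by omega))
  -- m + 1 ≠ N - 1 by parity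
  obtain ⟨p, hp⟩ := hodd
  obtain ⟨q, hq⟩ := id hoddm
  exact ⟨a, m + 1, hoddm, by omega, by omega, ha⟩

/-- Arcs of length `1 ≤ l ≤ N - 1` are paths. -/
lemma isPathOn_arcF (hN : 3 ≤ N) {s : ZMod N} {l : ℕ} (hl1 : 1 ≤ l) (hl2 : l ≤ N - 1) :
    IsPathOn (cadj N) (arcF s l) := by
  refine ⟨l - 1, fun i => s + ((i : ℕ) : ZMod N), ?_, ?_, ?_⟩
  · intro i j hij
    have hi : (i : ℕ) < l := by have := i.isLt; omega
    have hj : (j : ℕ) < l := by have := j.isLt; omega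
    exact Fin.ext (castInj (by omega) (by omega) (add_left_cancel hij))
  · ext x
    simp only [mem_arcF, Finset.mem_image, Finset.mem_univ, true_and]
    constructor
    · rintro ⟨k, hk, rfl⟩
      exact ⟨⟨k, by omega⟩, rfl⟩
    · rintro ⟨i, rfl⟩
      exact ⟨(i : ℕ), by have := i.isLt; omega, rfl⟩
  · intro i j
    have hi : (i : ℕ) < l := by have := i.isLt; omega
    have hj : (j : ℕ) < l := by have := j.isLt; omega
    constructor
    · rintro (h | h)
      · left
        have h0 : s + ((j : ℕ) : ZMod N) = s + ((i : ℕ) : ZMod N) + 1 := h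
        have h1 : ((j : ℕ) : ZMod N) = (((i : ℕ) + 1 : ℕ) : ZMod N) := by
          push_cast
          have h2 := add_left_cancel (show s + ((j:ℕ):ZMod N) = s + (((i:ℕ):ZMod N) + 1) by
            rw [h0]; ring)
          rw [h2]
        have := castInj (by omega) (by omega) h1
        omega
      · right
        have h0 : s + ((i : ℕ) : ZMod N) = s + ((j : ℕ) : ZMod N) + 1 := h
        have h1 : ((i : ℕ) : ZMod N) = (((j : ℕ) + 1 : ℕ) : ZMod N) := by
          push_cast
          have h2 := add_left_cancel (show s + ((i:ℕ):ZMod N) = s + (((j:ℕ):ZMod N) + 1) by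
            rw [h0]; ring)
          rw [h2]
        have := castInj (by omega) (by omega) h1
        omega
    · rintro (h | h)
      · refine Or.inl ?_
        show s + ((j:ℕ):ZMod N) = s + ((i:ℕ):ZMod N) + 1
        rw [← h]; push_cast; ring
      · refine Or.inr ?_
        show s + ((i:ℕ):ZMod N) = s + ((j:ℕ):ZMod N) + 1
        rw [← h]; push_cast; ring

lemma calI1_arcF (hN : 3 ≤ N) {s : ZMod N} {l : ℕ} (hlodd : Odd l) (hl1 : 1 ≤ l)
    (hl2 : l ≤ N - 1) : CalI1 (cadj N) (arcF s l) := by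
  refine ⟨isPathOn_arcF hN hl1 hl2, ?_⟩
  rw [card_arcF (by omega)]
  exact hlodd

lemma connOn_of_calI1 (hN : 3 ≤ N) (hodd : Odd N) {I : Finset (ZMod N)}
    (hI : CalI1 (cadj N) I) : ConnOn (cadj N) I := by
  obtain ⟨a, l, _, _, _, rfl⟩ := calI1_arc hN hodd hI
  exact connOn_arcF a l

end St16
namespace St16

open Finset

variable {N : ℕ} [NeZero N]

/-- Key membership lemma for `Iev` of an arc: odd interior offsets. -/
lemma mem_Iev_arcF (hN : 3 ≤ N) {s : ZMod N} {l j : ℕ} (hl : Odd l) (hlN : l ≤ N - 2)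
    (hj : Odd j) (hj1 : 1 ≤ j) (hj2 : j ≤ l - 2) :
    (s + (j : ZMod N)) ∈ Iev (cadj N) (arcF s l) := by
  have hl3 : 3 ≤ l := by
    obtain ⟨α, hα⟩ := id hl; obtain ⟨β, hβ⟩ := id hj; omega
  have hlodd := hl
  refine ⟨mem_arcF.2 ⟨j, by omega, rfl⟩, arcF s j,
    arcF (s + ((j + 1 : ℕ) : ZMod N)) (l - 1 - j), ?_, ?_, ?_, ?_⟩
  · exact calI1_arcF hN hj hj1 (by omega)
  · refine calI1_arcF hN ?_ (by omega) (by omega)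
    obtain ⟨α, hα⟩ := id hl; obtain ⟨β, hβ⟩ := id hj
    exact ⟨α - β - 1, by omega⟩
  · -- Spade
    have hdisj : ∀ x : ZMod N, x ∈ arcF s j →
        x ∈ arcF (s + ((j + 1 : ℕ) : ZMod N)) (l - 1 - j) → False := by
      intro x hx1 hx2
      rw [mem_arc_val (by omega)] at hx1
      rw [mem_arc_shift (by omega) (by omega)] at hx2
      have := ZMod.val_lt (x - s)
      split_ifs at hx2 with hc
      · omega
      · omega
    have hnadj : ∀ x ∈ arcF s j, ∀ y ∈ arcF (s + ((j + 1 : ℕ) : ZMod N)) (l - 1 - j),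
        ¬ cadj N x y ∧ ¬ cadj N y x := by
      intro x hx y hy
      obtain ⟨k, hk, rfl⟩ := mem_arcF.1 hx
      obtain ⟨k', hk', rfl⟩ := mem_arcF.1 hy
      have hyform : s + ((j + 1 : ℕ) : ZMod N) + (k' : ZMod N)
          = s + ((j + 1 + k' : ℕ) : ZMod N) := by push_cast; ring
      constructor
      · rintro (h | h)
        · -- y = x + 1 : j+1+k' = k+1
          rw [hyform] at h
          have h1 : s + ((j + 1 + k' : ℕ) : ZMod N) = s + ((k + 1 : ℕ) : ZMod N) := by
            rw [h]; push_cast; ring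
          have := castInj (j := j+1+k') (k := k+1) (by omega) (by omega) (add_left_cancel h1)
          omega
        · -- x = y + 1 : k = j+2+k'
          rw [hyform] at h
          have h1 : s + ((k : ℕ) : ZMod N) = s + ((j + 1 + k' + 1 : ℕ) : ZMod N) := by
            rw [h]; push_cast; ring
          have := castInj (j := k) (k := j+1+k'+1) (by omega) (by omega) (add_left_cancel h1)
          omega
      · rintro (h | h)
        · rw [hyform] at h
          have h1 : s + ((k : ℕ) : ZMod N) = s + ((j + 1 + k' + 1 : ℕ) : ZMod N) := by
            rw [h]; push_cast; ring
          have := castInj (j := k) (k := j+1+k'+1) (by omega) (by omega) (add_left_cancel h1)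
          omega
        · rw [hyform] at h
          have h1 : s + ((j + 1 + k' : ℕ) : ZMod N) = s + ((k + 1 : ℕ) : ZMod N) := by
            rw [h]; push_cast; ring
          have := castInj (j := j+1+k') (k := k+1) (by omega) (by omega) (add_left_cancel h1)
          omega
    refine ⟨Finset.eq_empty_iff_forall_notMem.2 ?_, ?_⟩
    · intro x hx
      rw [Finset.mem_inter] at hx
      exact hdisj x hx.1 hx.2
    · exact not_connOn_split (a := s) (b := s + ((j + 1 : ℕ) : ZMod N)) hdisj hnadj
        (mem_arcF.2 ⟨0, by omega, by simp⟩) (mem_arcF.2 ⟨0, by omega, by simp⟩)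
  · -- erase equality
    ext x
    have hvx := ZMod.val_lt (x - s)
    rw [Finset.mem_erase, Finset.mem_union, mem_arc_val (l := l) (by omega),
      mem_arc_val (l := j) (by omega), mem_arc_shift (by omega) (by omega),
      Ne, eq_add_iff_val (by omega)]
    split_ifs with hc
    · omega
    · omega

/-- From `Prec` between arcs: strict interior position. -/
lemma prec_arcs {a b : ZMod N} {la lb : ℕ} (hla : 1 ≤ la) (hlb : lb ≤ N - 1)
    (hprec : Prec (cadj N) (arcF a la) (arcF b lb)) :
    ∃ d : ℕ, 1 ≤ d ∧ d + la < lb ∧ a = b + (d : ZMod N) := by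
  have hN1 : 1 ≤ N := Nat.one_le_iff_ne_zero.2 (NeZero.ne N)
  obtain ⟨hssub, hnconn⟩ := hprec
  have hsub : arcF a la ⊆ arcF b lb := hssub.subset
  set d := (a - b).val with hd
  have hdN : d < N := ZMod.val_lt _
  have hab : a = b + (d : ZMod N) := by
    rw [hd, ZMod.natCast_rightInverse (a - b)]; ring
  have hdlb : d < lb := by
    have h1 : a ∈ arcF b lb := hsub (mem_arcF.2 ⟨0, by omega, by simp⟩)
    rwa [mem_arc_val (by omega)] at h1
  have hdla : d + la ≤ lb := by
    by_contra hcon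
    push_neg at hcon
    set k := lb - d with hk
    have hkla : k < la := by omega
    have hx : a + (k : ZMod N) ∈ arcF a la := mem_arcF.2 ⟨k, hkla, rfl⟩
    have hx2 := hsub hx
    rw [mem_arc_val (by omega)] at hx2
    have hxb : a + (k : ZMod N) - b = ((d + k : ℕ) : ZMod N) := by
      rw [hab]; push_cast; ring
    rw [hxb, ZMod.val_natCast, Nat.mod_eq_of_lt (by omega)] at hx2
    omega
  -- exclude d = 0
  have hd0 : d ≠ 0 := by
    intro h0
    apply hnconn
    have harc : arcF b lb \ arcF a la = arcF (b + ((la : ℕ) : ZMod N)) (lb - la) := by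
      ext x
      have hvx := ZMod.val_lt (x - b)
      rw [Finset.mem_sdiff, mem_arc_val (l := lb) (by omega),
        show a = b from by rw [hab, h0]; simp,
        mem_arc_val (l := la) (by omega), mem_arc_shift (by omega) (by omega)]
      split_ifs with hc
      · omega
      · omega
    rw [harc]
    exact connOn_arcF _ _
  -- exclude d + la = lb
  have hdlb2 : d + la ≠ lb := by
    intro h0
    apply hnconn
    have harc : arcF b lb \ arcF a la = arcF b d := by
      ext x
      have hvx := ZMod.val_lt (x - b)
      rw [Finset.mem_sdiff, mem_arc_val (l := lb) (by omega), hab,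
        mem_arc_shift (by omega) (by omega), mem_arc_val (l := d) (by omega)]
      split_ifs with hc
      · omega
      · omega
    rw [harc]
    exact connOn_arcF _ _
  exact ⟨d, by omega, by omega, hab⟩

lemma prec_interior {a b : ZMod N} {la lb : ℕ} (hla : 1 ≤ la) (hlb : lb ≤ N - 1)
    (hprec : Prec (cadj N) (arcF a la) (arcF b lb)) {x y : ZMod N}
    (hx : x ∉ arcF a la) (hy : y ∈ arcF a la) (hadj : cadj N x y) : x ∈ arcF b lb := by
  obtain ⟨d, hd1, hd2, hd3⟩ := prec_arcs hla hlb hprec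
  obtain ⟨k, hk, rfl⟩ := mem_arcF.1 hy
  rcases hadj with h | h
  · -- y = x + 1, so x = y - 1 = a + k - 1
    have hx1 : x = a + (k : ZMod N) - 1 := by rw [h]; ring
    rcases Nat.eq_zero_or_pos k with hk0 | hkpos
    · subst hk0
      refine mem_arcF.2 ⟨d - 1, by omega, ?_⟩
      rw [hx1, hd3]
      have : ((d - 1 : ℕ) : ZMod N) = (d : ZMod N) - 1 := by
        rw [Nat.cast_sub (by omega), Nat.cast_one]
      rw [this]; push_cast; ring
    · exfalso
      apply hx
      refine mem_arcF.2 ⟨k - 1, by omega, ?_⟩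
      rw [hx1]
      have : ((k - 1 : ℕ) : ZMod N) = (k : ZMod N) - 1 := by
        rw [Nat.cast_sub (by omega), Nat.cast_one]
      rw [this]; ring
  · -- x = y + 1 = a + (k+1)
    have hx1 : x = a + ((k + 1 : ℕ) : ZMod N) := by rw [h]; push_cast; ring
    by_cases hk1 : k + 1 < la
    · exact absurd (mem_arcF.2 ⟨k + 1, hk1, hx1⟩) hx
    · refine mem_arcF.2 ⟨d + la, hd2, ?_⟩
      rw [hx1, hd3]
      have hkla : k + 1 = la := by omega
      rw [hkla]; push_cast; ring

lemma right_endpoint {a v : ZMod N} {la : ℕ} (hla : 1 ≤ la)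
    (hv : v ∈ arcF a la) (hv1 : v + 1 ∉ arcF a la) :
    v = a + ((la - 1 : ℕ) : ZMod N) := by
  obtain ⟨k, hk, rfl⟩ := mem_arcF.1 hv
  by_cases h : k + 1 < la
  · exact absurd (mem_arcF.2 ⟨k + 1, h, by push_cast; ring⟩) hv1
  · have : k = la - 1 := by omega
    rw [this]

lemma left_endpoint {a v : ZMod N} {la : ℕ} (hv : v ∈ arcF a la)
    (hv1 : v - 1 ∉ arcF a la) : v = a := by
  obtain ⟨k, hk, rfl⟩ := mem_arcF.1 hv
  rcases Nat.eq_zero_or_pos k with h0 | hpos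
  · rw [h0]; simp
  · exfalso
    apply hv1
    refine mem_arcF.2 ⟨k - 1, by omega, ?_⟩
    have : ((k - 1 : ℕ) : ZMod N) = (k : ZMod N) - 1 := by
      rw [Nat.cast_sub (by omega), Nat.cast_one]
    rw [this]; ring

lemma inter_pair {S : Type} [DecidableEq S] {I : Finset S} {t t' : S} (hne : t ≠ t') :
    (I ∩ {t, t'}).card = 1 ↔ ((t ∈ I ∧ t' ∉ I) ∨ (t' ∈ I ∧ t ∉ I)) := by
  by_cases ht : t ∈ I <;> by_cases ht' : t' ∈ I
  · have h : I ∩ {t, t'} = {t, t'} := Finset.inter_eq_right.2 (by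
      intro x hx
      rcases Finset.mem_insert.1 hx with rfl | hx
      · exact ht
      · rw [Finset.mem_singleton.1 hx]; exact ht')
    rw [h, Finset.card_pair hne]
    simp [ht, ht']
  · have h : I ∩ {t, t'} = {t} := by
      ext x
      simp only [Finset.mem_inter, Finset.mem_insert, Finset.mem_singleton]
      constructor
      · rintro ⟨hxI, rfl | rfl⟩
        · rfl
        · exact absurd hxI ht'
      · rintro rfl
        exact ⟨ht, Or.inl rfl⟩
    rw [h, Finset.card_singleton]
    simp [ht, ht']
  · have h : I ∩ {t, t'} = {t'} := by
      ext x
      simp only [Finset.mem_inter, Finset.mem_insert, Finset.mem_singleton]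
      constructor
      · rintro ⟨hxI, rfl | rfl⟩
        · exact absurd hxI ht
        · rfl
      · rintro rfl
        exact ⟨ht', Or.inr rfl⟩
    rw [h, Finset.card_singleton]
    simp [ht, ht']
  · have h : I ∩ {t, t'} = ∅ := by
      ext x
      simp only [Finset.mem_inter, Finset.mem_insert, Finset.mem_singleton,
        Finset.notMem_empty, iff_false, not_and]
      rintro hxI (rfl | rfl)
      · exact ht hxI
      · exact ht' hxI
    rw [h]
    simp [ht, ht']

lemma inter_pair_full {S : Type} [DecidableEq S] {I ee : Finset S} (hcard : ee.card = 2)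
    {v : S} (hvI : v ∈ I) (hvee : v ∈ ee) (h1 : (I ∩ ee).card ≠ 1) : ee ⊆ I := by
  have h2 : (I ∩ ee).card ≤ 2 := hcard ▸ Finset.card_le_card Finset.inter_subset_right
  have h3 : 0 < (I ∩ ee).card := Finset.card_pos.2 ⟨v, Finset.mem_inter.2 ⟨hvI, hvee⟩⟩
  have h4 : I ∩ ee = ee := Finset.eq_of_subset_of_card_le Finset.inter_subset_right (by omega)
  intro x hx
  rw [← h4] at hx
  exact (Finset.mem_inter.1 hx).1

lemma not_superset_of_card_one {S : Type} [DecidableEq S] {I ee : Finset S}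
    (hcard : ee.card = 2) (h : (I ∩ ee).card = 1) : ¬ ee ⊆ I := by
  intro hs
  rw [Finset.inter_eq_right.2 hs] at h
  omega

lemma nB_erase {B : Finset (Finset (ZMod N))} {J ee : Finset (ZMod N)} (h : ¬ ee ⊆ J) :
    nB ee (B.erase J) = nB ee B := by
  unfold nB
  rw [Finset.filter_erase, Finset.erase_eq_of_notMem]
  intro hm
  exact h (Finset.mem_filter.1 hm).2

end St16
namespace St16

open Finset

variable {N : ℕ} [NeZero N]

lemma clash (hN : 3 ≤ N) (hodd : Odd N) {B : Finset (Finset (ZMod N))}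
    (hB : B ∈ phiSet (cadj N)) {J X : Finset (ZMod N)} (hJ : J ∈ B) (hX : X ∈ B)
    {x y : ZMod N} (hxX : x ∈ X) (hxJ : x ∉ J) (hyJ : y ∈ J) (hadj : cadj N x y)
    (hnsub : ¬ J ⊂ X) : False := by
  obtain ⟨hcal, hP0, hP1⟩ := hB
  rcases hP0 J hJ X hX with rfl | hsp | hpr | hpr
  · exact hxJ hxX
  · exact hsp.2 (connOn_union (fun a b h => Or.symm h)
      (connOn_of_calI1 hN hodd (hcal J hJ)) (connOn_of_calI1 hN hodd (hcal X hX))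
      hyJ hxX (Or.symm hadj))
  · exact hnsub hpr.1
  · exact hxJ (hpr.1.subset hxX)

lemma unique_card_one (hN : 3 ≤ N) (hodd : Odd N) {B : Finset (Finset (ZMod N))}
    (hB : B ∈ phiSet (cadj N)) {t : ZMod N} {I1 I2 : Finset (ZMod N)}
    (h1B : I1 ∈ B) (h1 : (I1 ∩ {t, t + 1}).card = 1)
    (h2B : I2 ∈ B) (h2 : (I2 ∩ {t, t + 1}).card = 1) : I1 = I2 := by
  have hne : t ≠ t + 1 := self_ne_add_one hN t
  have hcal := hB.1
  have hP0 := hB.2.1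
  -- arc representations
  obtain ⟨a1, l1, hl1odd, hl11, hl1N, hI1eq⟩ := calI1_arc hN hodd (hcal I1 h1B)
  obtain ⟨a2, l2, hl2odd, hl21, hl2N, hI2eq⟩ := calI1_arc hN hodd (hcal I2 h2B)
  have hconn1 := connOn_of_calI1 hN hodd (hcal I1 h1B)
  have hconn2 := connOn_of_calI1 hN hodd (hcal I2 h2B)
  rcases (inter_pair hne).1 h1 with ⟨ht1, ht1'⟩ | ⟨ht1, ht1'⟩ <;>
    rcases (inter_pair hne).1 h2 with ⟨ht2, ht2'⟩ | ⟨ht2, ht2'⟩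
  · -- t ∈ I1, t ∈ I2, t+1 in neither
    by_contra hne12
    rcases hP0 I1 h1B I2 h2B with h | hsp | hpr | hpr
    · exact hne12 h
    · exact Finset.notMem_empty t (hsp.1 ▸ Finset.mem_inter.2 ⟨ht1, ht2⟩)
    · rw [hI1eq, hI2eq] at hpr
      have := prec_interior hl11 (by omega) hpr (x := t + 1) (y := t)
        (by rw [← hI1eq]; exact ht1') (by rw [← hI1eq]; exact ht1) (Or.inr rfl)
      rw [← hI2eq] at this
      exact ht2' this
    · rw [hI1eq, hI2eq] at hpr
      have := prec_interior hl21 (by omega) hpr (x := t + 1) (y := t)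
        (by rw [← hI2eq]; exact ht2') (by rw [← hI2eq]; exact ht2) (Or.inr rfl)
      rw [← hI1eq] at this
      exact ht1' this
  · -- t ∈ I1, t+1 ∈ I2 : impossible
    exfalso
    rcases hP0 I1 h1B I2 h2B with h | hsp | hpr | hpr
    · rw [h] at ht1; exact ht2' ht1
    · exact hsp.2 (connOn_union (fun a b h => Or.symm h) hconn1 hconn2 ht1 ht2 (Or.inl rfl))
    · exact ht2' (hpr.1.subset ht1)
    · exact ht1' (hpr.1.subset ht2)
  · -- t+1 ∈ I1, t ∈ I2 : impossible
    exfalso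
    rcases hP0 I1 h1B I2 h2B with h | hsp | hpr | hpr
    · rw [h] at ht1; exact ht2' ht1
    · exact hsp.2 (connOn_union (fun a b h => Or.symm h) hconn1 hconn2 ht1 ht2 (Or.inr rfl))
    · exact ht2' (hpr.1.subset ht1)
    · exact ht1' (hpr.1.subset ht2)
  · -- t+1 ∈ I1, t+1 ∈ I2, t in neither
    by_contra hne12
    rcases hP0 I1 h1B I2 h2B with h | hsp | hpr | hpr
    · exact hne12 h
    · exact Finset.notMem_empty (t+1) (hsp.1 ▸ Finset.mem_inter.2 ⟨ht1, ht2⟩)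
    · rw [hI1eq, hI2eq] at hpr
      have := prec_interior hl11 (by omega) hpr (x := t) (y := t + 1)
        (by rw [← hI1eq]; exact ht1') (by rw [← hI1eq]; exact ht1) (Or.inl rfl)
      rw [← hI2eq] at this
      exact ht2' this
    · rw [hI1eq, hI2eq] at hpr
      have := prec_interior hl21 (by omega) hpr (x := t) (y := t + 1)
        (by rw [← hI2eq]; exact ht2') (by rw [← hI2eq]; exact ht2) (Or.inl rfl)
      rw [← hI1eq] at this
      exact ht1' this

lemma ee_vertex (hN : 3 ≤ N) (hodd : Odd N) {u : ZMod N} {l : ℕ} (hl : Odd l)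
    (hlN : l ≤ N - 2) {t : ZMod N} (hee : ({t, t + 1} : Finset (ZMod N)) ⊆ arcF u l) :
    ∃ v ∈ ({t, t + 1} : Finset (ZMod N)), v ∈ Iev (cadj N) (arcF u l) := by
  have ht : t ∈ arcF u l := hee (Finset.mem_insert_self _ _)
  have ht' : t + 1 ∈ arcF u l := hee (by simp)
  obtain ⟨p, hp, hpt⟩ := mem_arcF.1 ht
  obtain ⟨q, hq, hqt⟩ := mem_arcF.1 ht'
  have hqp : q = p + 1 := by
    have h1 : u + ((q : ℕ) : ZMod N) = u + ((p + 1 : ℕ) : ZMod N) := by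
      rw [← hqt, hpt]; push_cast; ring
    exact castInj (by omega) (by omega) (add_left_cancel h1)
  obtain ⟨α, hα⟩ := id hl
  rcases Nat.even_or_odd p with hpe | hpo
  · obtain ⟨β, hβ⟩ := id hpe
    refine ⟨t + 1, by simp, ?_⟩
    have hform : t + 1 = u + ((p + 1 : ℕ) : ZMod N) := by rw [hpt]; push_cast; ring
    rw [hform]
    exact mem_Iev_arcF hN hl hlN ⟨β, by omega⟩ (by omega) (by omega)
  · obtain ⟨β, hβ⟩ := id hpo
    refine ⟨t, Finset.mem_insert_self _ _, ?_⟩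
    rw [hpt]
    exact mem_Iev_arcF hN hl hlN hpo (by omega) (by omega)

lemma key_lemma (hN : 3 ≤ N) (hodd : Odd N) {B : Finset (Finset (ZMod N))}
    (hB : B ∈ phiSet (cadj N)) {K0 : Finset (ZMod N)} (hK0 : K0 ∈ B)
    {ee : Finset (ZMod N)} (heecard : ee.card = 2)
    (hmin : ∀ K' ∈ B, ee ⊆ K' → ¬ K' ⊂ K0) {v : ZMod N}
    (hv : v ∈ Iev (cadj N) K0) (hvee : v ∈ ee) :
    ∃ I ∈ B, v ∈ I ∧ (I ∩ ee).card = 1 ∧ Prec (cadj N) I K0 := by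
  obtain ⟨hcal, hP0, hP1⟩ := hB
  obtain ⟨k, f, hf1, hf2, hf3⟩ := hP1 K0 hK0
  obtain ⟨j, hj⟩ := Set.mem_iUnion.1 (hf3 hv)
  have hvfj : v ∈ f j := hj
  refine ⟨f j, (hf1 j).1, hvfj, ?_, (hf1 j).2⟩
  by_contra hcc
  have hsub : ee ⊆ f j := inter_pair_full heecard hvfj hvee hcc
  exact hmin (f j) (hf1 j).1 hsub (hf1 j).2.1

lemma exists_card_one (hN : 3 ≤ N) (hodd : Odd N) {B : Finset (Finset (ZMod N))}
    (hB : B ∈ phiSet (cadj N)) {t : ZMod N}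
    (hsupp : (suppB B ∩ ({t, t + 1} : Finset (ZMod N))).Nonempty) :
    ∃ I ∈ B, (I ∩ ({t, t + 1} : Finset (ZMod N))).card = 1 := by
  classical
  have hne : t ≠ t + 1 := self_ne_add_one hN t
  have heecard : ({t, t + 1} : Finset (ZMod N)).card = 2 := Finset.card_pair hne
  obtain ⟨x, hx⟩ := hsupp
  rw [Finset.mem_inter] at hx
  obtain ⟨hxs, hxee⟩ := hx
  obtain ⟨I0, hI0B, hxI0⟩ := Finset.mem_biUnion.1 hxs
  by_contra hno
  push_neg at hno
  have hcont : ({t, t + 1} : Finset (ZMod N)) ⊆ I0 :=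
    inter_pair_full heecard hxI0 hxee (hno I0 hI0B)
  have hTne : (B.filter (fun K => ({t, t + 1} : Finset (ZMod N)) ⊆ K)).Nonempty :=
    ⟨I0, Finset.mem_filter.2 ⟨hI0B, hcont⟩⟩
  obtain ⟨K0, hK0T, hK0m⟩ : ∃ K0 ∈ B.filter (fun K => ({t, t + 1} : Finset (ZMod N)) ⊆ K),
      ∀ x ∈ B.filter (fun K => ({t, t + 1} : Finset (ZMod N)) ⊆ K), ¬ x < K0 :=
    (Finset.exists_minimal hTne).imp fun K hK =>
    ⟨hK.1, fun x hx hlt => hK.not_lt hx hlt⟩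
  obtain ⟨hK0B, hK0ee⟩ := Finset.mem_filter.1 hK0T
  have hmin : ∀ K' ∈ B, ({t, t + 1} : Finset (ZMod N)) ⊆ K' → ¬ K' ⊂ K0 :=
    fun K' hK' hee' => hK0m K' (Finset.mem_filter.2 ⟨hK', hee'⟩)
  obtain ⟨u, l, hlodd, hl1, hlN, hK0eq⟩ := calI1_arc hN hodd (hB.1 K0 hK0B)
  obtain ⟨v, hvee, hvIev⟩ := ee_vertex hN hodd hlodd hlN (hK0eq ▸ hK0ee)
  rw [← hK0eq] at hvIev
  obtain ⟨I, hIB, _, hIc, _⟩ := key_lemma hN hodd hB hK0B heecard hmin hvIev hvee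
  exact hno I hIB hIc

end St16
namespace St16

open Finset

variable {N : ℕ} [NeZero N]

lemma endgame_core (hN : 3 ≤ N) (hodd : Odd N)
    {B₁ B₂ : Finset (Finset (ZMod N))} {K0 ee : Finset (ZMod N)}
    (heecard : ee.card = 2)
    (hB₁ : B₁ ∈ phiSet (cadj N)) (hB₂ : B₂ ∈ phiSet (cadj N))
    {J₁ J₂ : Finset (ZMod N)} (hJ₁B : J₁ ∈ B₁) (hJ₂B : J₂ ∈ B₂)
    (hE : B₂.erase J₂ ⊆ B₁)
    (hC1 : ∀ X ∈ B₂.erase J₂, (X ∩ ee).card ≠ 1)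
    (hmin : ∀ K' ∈ B₁, ee ⊆ K' → ¬ K' ⊂ K0)
    (hJ₂K0 : J₂ ⊂ K0)
    {v x y : ZMod N} (hvee : v ∈ ee) (hvJ₁ : v ∈ J₁)
    (hxIev : x ∈ Iev (cadj N) J₂)
    (hxJ₁ : x ∉ J₁) (hyJ₁ : y ∈ J₁) (hadj : cadj N x y) : False := by
  obtain ⟨hcal₂, hP0₂, hP1₂⟩ := hB₂
  obtain ⟨k, f, hf1, hf2, hf3⟩ := hP1₂ J₂ hJ₂B
  obtain ⟨j, hj⟩ := Set.mem_iUnion.1 (hf3 hxIev)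
  have hxX : x ∈ f j := hj
  have hXprec : Prec (cadj N) (f j) J₂ := (hf1 j).2
  have hXne : f j ≠ J₂ := hXprec.1.ne
  have hXe : f j ∈ B₂.erase J₂ := Finset.mem_erase.2 ⟨hXne, (hf1 j).1⟩
  have hXB₁ : f j ∈ B₁ := hE hXe
  refine clash hN hodd (⟨hB₁.1, hB₁.2.1, hB₁.2.2⟩) hJ₁B hXB₁ hxX hxJ₁ hyJ₁ hadj ?_
  intro hJX
  have hvX : v ∈ f j := hJX.subset hvJ₁
  have hc1 : (f j ∩ ee).card ≠ 1 := hC1 _ hXe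
  have heeX : ee ⊆ f j := inter_pair_full heecard hvX hvee hc1
  exact hmin (f j) hXB₁ heeX (hXprec.1.trans hJ₂K0)

lemma endgame_left (hN : 3 ≤ N) (hodd : Odd N)
    {B₁ B₂ : Finset (Finset (ZMod N))} {K0 ee : Finset (ZMod N)}
    (heecard : ee.card = 2)
    (hB₁ : B₁ ∈ phiSet (cadj N)) (hB₂ : B₂ ∈ phiSet (cadj N))
    {J₁ J₂ : Finset (ZMod N)} (hJ₁B : J₁ ∈ B₁) (hJ₂B : J₂ ∈ B₂)
    (hE : B₂.erase J₂ ⊆ B₁)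
    (hC1 : ∀ X ∈ B₂.erase J₂, (X ∩ ee).card ≠ 1)
    (hmin : ∀ K' ∈ B₁, ee ⊆ K' → ¬ K' ⊂ K0)
    (hJ₂K0 : J₂ ⊂ K0)
    {v : ZMod N} (hvee : v ∈ ee)
    {l₁ l₂ : ℕ} (hJ₁ : J₁ = arcF v l₁) (hJ₂ : J₂ = arcF v l₂)
    (hl₁ : Odd l₁) (hl₂ : Odd l₂) (hl₁1 : 1 ≤ l₁) (hl₂N : l₂ ≤ N - 2)
    (hlt : l₁ < l₂) : False := by
  obtain ⟨α, hα⟩ := id hl₁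
  obtain ⟨β, hβ⟩ := id hl₂
  have hxIev : v + ((l₁ : ℕ) : ZMod N) ∈ Iev (cadj N) J₂ := by
    rw [hJ₂]
    exact mem_Iev_arcF hN hl₂ hl₂N hl₁ hl₁1 (by omega)
  refine endgame_core hN hodd heecard hB₁ hB₂ hJ₁B hJ₂B hE hC1 hmin hJ₂K0 hvee
    (v := v) (x := v + ((l₁ : ℕ) : ZMod N)) (y := v + ((l₁ - 1 : ℕ) : ZMod N))
    ?_ hxIev ?_ ?_ ?_
  · rw [hJ₁]; exact mem_arcF.2 ⟨0, by omega, by simp⟩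
  · rw [hJ₁]; exact add_len_not_mem (by omega)
  · rw [hJ₁]; exact mem_arcF.2 ⟨l₁ - 1, by omega, rfl⟩
  · refine Or.inr ?_
    rw [Nat.cast_sub (by omega), Nat.cast_one]
    ring

lemma endgame_right (hN : 3 ≤ N) (hodd : Odd N)
    {B₁ B₂ : Finset (Finset (ZMod N))} {K0 ee : Finset (ZMod N)}
    (heecard : ee.card = 2)
    (hB₁ : B₁ ∈ phiSet (cadj N)) (hB₂ : B₂ ∈ phiSet (cadj N))
    {J₁ J₂ : Finset (ZMod N)} (hJ₁B : J₁ ∈ B₁) (hJ₂B : J₂ ∈ B₂)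
    (hE : B₂.erase J₂ ⊆ B₁)
    (hC1 : ∀ X ∈ B₂.erase J₂, (X ∩ ee).card ≠ 1)
    (hmin : ∀ K' ∈ B₁, ee ⊆ K' → ¬ K' ⊂ K0)
    (hJ₂K0 : J₂ ⊂ K0)
    {v a₁ a₂ : ZMod N} (hvee : v ∈ ee)
    {l₁ l₂ : ℕ} (hJ₁ : J₁ = arcF a₁ l₁) (hJ₂ : J₂ = arcF a₂ l₂)
    (hv₁ : v = a₁ + ((l₁ - 1 : ℕ) : ZMod N)) (hv₂ : v = a₂ + ((l₂ - 1 : ℕ) : ZMod N))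
    (hl₁ : Odd l₁) (hl₂ : Odd l₂) (hl₁1 : 1 ≤ l₁) (hl₂N : l₂ ≤ N - 2)
    (hlt : l₁ < l₂) : False := by
  obtain ⟨α, hα⟩ := id hl₁
  obtain ⟨β, hβ⟩ := id hl₂
  have ha : a₁ = a₂ + ((l₂ - l₁ : ℕ) : ZMod N) := by
    have hsum : (l₂ - l₁) + (l₁ - 1) = l₂ - 1 := by omega
    have h1 : a₂ + ((l₂ - l₁ : ℕ) : ZMod N) + ((l₁ - 1 : ℕ) : ZMod N)
        = a₁ + ((l₁ - 1 : ℕ) : ZMod N) := by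
      rw [← hv₁, hv₂, ← hsum]; push_cast; ring
    exact (add_right_cancel h1).symm
  have hxform : a₁ - 1 = a₂ + ((l₂ - l₁ - 1 : ℕ) : ZMod N) := by
    rw [ha, Nat.cast_sub (by omega : 1 ≤ l₂ - l₁), Nat.cast_one]
    ring
  have hxIev : a₁ - 1 ∈ Iev (cadj N) J₂ := by
    rw [hJ₂, hxform]
    exact mem_Iev_arcF hN hl₂ hl₂N ⟨β - α - 1, by omega⟩ (by omega) (by omega)
  refine endgame_core hN hodd heecard hB₁ hB₂ hJ₁B hJ₂B hE hC1 hmin hJ₂K0 hvee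
    (v := v) (x := a₁ - 1) (y := a₁) ?_ hxIev ?_ ?_ ?_
  · rw [hJ₁, hv₁]; exact mem_arcF.2 ⟨l₁ - 1, by omega, rfl⟩
  · rw [hJ₁]; exact sub_one_not_mem (by omega)
  · rw [hJ₁]; exact mem_arcF.2 ⟨0, by omega, by simp⟩
  · exact Or.inl (by ring)

lemma no_two (hN : 3 ≤ N) (hodd : Odd N) {B B' : Finset (Finset (ZMod N))}
    (hB : B ∈ phiSet (cadj N)) (hB' : B' ∈ phiSet (cadj N)) {t : ZMod N}
    {J J' : Finset (ZMod N)} (hJB : J ∈ B) (hJ'B : J' ∈ B')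
    (hJc : (J ∩ {t, t + 1}).card = 1) (hJ'c : (J' ∩ {t, t + 1}).card = 1)
    (hJne : J ≠ J') (hC : B.erase J = B'.erase J')
    (hn : Odd (nB {t, t + 1} B)) : False := by
  classical
  have hne : t ≠ t + 1 := self_ne_add_one hN t
  have heecard : ({t, t + 1} : Finset (ZMod N)).card = 2 := Finset.card_pair hne
  have hJee : ¬ ({t, t + 1} : Finset (ZMod N)) ⊆ J := not_superset_of_card_one heecard hJc
  have hJ'ee : ¬ ({t, t + 1} : Finset (ZMod N)) ⊆ J' := not_superset_of_card_one heecard hJ'c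
  have hC1 : ∀ X ∈ B.erase J, (X ∩ ({t, t + 1} : Finset (ZMod N))).card ≠ 1 := by
    intro X hX h1
    obtain ⟨hXne, hXB⟩ := Finset.mem_erase.1 hX
    exact hXne (unique_card_one hN hodd hB hXB h1 hJB hJc)
  have hC1' : ∀ X ∈ B'.erase J', (X ∩ ({t, t + 1} : Finset (ZMod N))).card ≠ 1 := by
    intro X hX h1
    obtain ⟨hXne, hXB⟩ := Finset.mem_erase.1 hX
    exact hXne (unique_card_one hN hodd hB' hXB h1 hJ'B hJ'c)
  -- a K containing ee exists in B.erase J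
  have hnC : Odd (nB ({t, t + 1} : Finset (ZMod N)) (B.erase J)) := by
    rwa [nB_erase hJee]
  have hKex : ∃ K1 ∈ B.erase J, ({t, t + 1} : Finset (ZMod N)) ⊆ K1 := by
    have hpos : 0 < nB ({t, t + 1} : Finset (ZMod N)) (B.erase J) := hnC.pos
    obtain ⟨K1, hK1⟩ := Finset.card_pos.1 hpos
    rw [Finset.mem_filter] at hK1
    exact ⟨K1, hK1.1, hK1.2⟩
  obtain ⟨K1, hK1e, hK1ee⟩ := hKex
  have hTne : (B.filter (fun K => ({t, t + 1} : Finset (ZMod N)) ⊆ K)).Nonempty :=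
    ⟨K1, Finset.mem_filter.2 ⟨Finset.mem_of_mem_erase hK1e, hK1ee⟩⟩
  obtain ⟨K0, hK0T, hK0m⟩ : ∃ K0 ∈ B.filter (fun K => ({t, t + 1} : Finset (ZMod N)) ⊆ K),
      ∀ x ∈ B.filter (fun K => ({t, t + 1} : Finset (ZMod N)) ⊆ K), ¬ x < K0 :=
    (Finset.exists_minimal hTne).imp fun K hK =>
    ⟨hK.1, fun x hx hlt => hK.not_lt hx hlt⟩
  obtain ⟨hK0B, hK0ee⟩ := Finset.mem_filter.1 hK0T
  have hminB : ∀ K' ∈ B, ({t, t + 1} : Finset (ZMod N)) ⊆ K' → ¬ K' ⊂ K0 :=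
    fun K' h1 h2 => hK0m K' (Finset.mem_filter.2 ⟨h1, h2⟩)
  have hK0J : K0 ≠ J := fun h => hJee (h ▸ hK0ee)
  have hK0e : K0 ∈ B.erase J := Finset.mem_erase.2 ⟨hK0J, hK0B⟩
  have hK0B' : K0 ∈ B' := Finset.mem_of_mem_erase (hC ▸ hK0e)
  have hminB' : ∀ K' ∈ B', ({t, t + 1} : Finset (ZMod N)) ⊆ K' → ¬ K' ⊂ K0 := by
    intro K' h1 h2
    have hK'J' : K' ≠ J' := fun h => hJ'ee (h ▸ h2)
    have hK'e : K' ∈ B.erase J := hC ▸ (Finset.mem_erase.2 ⟨hK'J', h1⟩)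
    exact hminB K' (Finset.mem_of_mem_erase hK'e) h2
  -- subset relations between the erased sets
  have hEB : B'.erase J' ⊆ B := by
    rw [← hC]; exact Finset.erase_subset _ _
  have hEB' : B.erase J ⊆ B' := by
    rw [hC]; exact Finset.erase_subset _ _
  -- arc form of K0 and distinguished vertex v
  obtain ⟨u, l, hlodd, hl1, hlN, hK0eq⟩ := calI1_arc hN hodd (hB.1 K0 hK0B)
  obtain ⟨v, hvee, hvIev⟩ := ee_vertex hN hodd hlodd hlN (hK0eq ▸ hK0ee)
  rw [← hK0eq] at hvIev
  -- the unique elements with card 1 contain v and precede K0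
  obtain ⟨I1, hI1B, hvI1, hI1c, hI1p⟩ := key_lemma hN hodd hB hK0B heecard hminB hvIev hvee
  obtain ⟨I2, hI2B, hvI2, hI2c, hI2p⟩ := key_lemma hN hodd hB' hK0B' heecard hminB' hvIev hvee
  have hI1J : I1 = J := unique_card_one hN hodd hB hI1B hI1c hJB hJc
  have hI2J' : I2 = J' := unique_card_one hN hodd hB' hI2B hI2c hJ'B hJ'c
  rw [hI1J] at hvI1 hI1p
  rw [hI2J'] at hvI2 hI2p
  -- arc forms of J and J'
  obtain ⟨a, la, hlaodd, hla1, hlaN, hJeq⟩ := calI1_arc hN hodd (hB.1 J hJB)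
  obtain ⟨a', la', hla'odd, hla'1, hla'N, hJ'eq⟩ := calI1_arc hN hodd (hB'.1 J' hJ'B)
  -- which vertex of ee is v
  rcases Finset.mem_insert.1 hvee with hv | hv
  · -- v = t, so t + 1 ∉ J and t + 1 ∉ J' : v is a right endpoint
    subst hv
    have h1 : v + 1 ∉ J := by
      rcases (inter_pair hne).1 hJc with ⟨_, h⟩ | ⟨_, h⟩
      · exact h
      · exact absurd hvI1 h
    have h2 : v + 1 ∉ J' := by
      rcases (inter_pair hne).1 hJ'c with ⟨_, h⟩ | ⟨_, h⟩
      · exact h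
      · exact absurd hvI2 h
    have hva : v = a + ((la - 1 : ℕ) : ZMod N) :=
      right_endpoint hla1 (hJeq ▸ hvI1) (hJeq ▸ h1)
    have hva' : v = a' + ((la' - 1 : ℕ) : ZMod N) :=
      right_endpoint hla'1 (hJ'eq ▸ hvI2) (hJ'eq ▸ h2)
    have hlane : la ≠ la' := by
      intro h
      apply hJne
      rw [hJeq, hJ'eq]
      have : a = a' := by
        rw [h] at hva
        exact add_right_cancel (hva.symm.trans hva')
      rw [this, h]
    rcases Nat.lt_or_ge la la' with hlt | hge
    · exact endgame_right hN hodd heecard hB hB' hJB hJ'B hEB hC1' hminB hI2p.1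
        hvee hJeq hJ'eq hva hva' hlaodd hla'odd hla1 hla'N hlt
    · exact endgame_right hN hodd heecard hB' hB hJ'B hJB hEB' hC1 hminB' hI1p.1
        hvee hJ'eq hJeq hva' hva hla'odd hlaodd hla'1 hlaN (by omega)
  · -- v = t + 1, so t ∉ J and t ∉ J' : v is a left endpoint
    rw [Finset.mem_singleton] at hv
    subst hv
    have h1 : t ∉ J := by
      rcases (inter_pair hne).1 hJc with ⟨_, h⟩ | ⟨_, h⟩
      · exact absurd hvI1 h
      · exact h
    have h2 : t ∉ J' := by
      rcases (inter_pair hne).1 hJ'c with ⟨_, h⟩ | ⟨_, h⟩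
      · exact absurd hvI2 h
      · exact h
    have hta : t = (t + 1) - 1 := by ring
    have hva : t + 1 = a := left_endpoint (hJeq ▸ hvI1) (by rw [← hta]; exact hJeq ▸ h1)
    have hva' : t + 1 = a' := left_endpoint (hJ'eq ▸ hvI2) (by rw [← hta]; exact hJ'eq ▸ h2)
    rw [← hva] at hJeq
    rw [← hva'] at hJ'eq
    have hlane : la ≠ la' := by
      intro h
      apply hJne
      rw [hJeq, hJ'eq, h]
    rcases Nat.lt_or_ge la la' with hlt | hge
    · exact endgame_left hN hodd heecard hB hB' hJB hJ'B hEB hC1' hminB hI2p.1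
        hvee hJeq hJ'eq hlaodd hla'odd hla1 hla'N hlt
    · exact endgame_left hN hodd heecard hB' hB hJ'B hJB hEB' hC1 hminB' hI1p.1
        hvee hJ'eq hJeq hla'odd hlaodd hla'1 hlaN (by omega)

end St16
namespace St16

open Finset

variable {N : ℕ} [NeZero N]

lemma injOn_bangF (hN : 3 ≤ N) (hodd : Odd N) (t : ZMod N) :
    Set.InjOn (bangF ({t, t + 1} : Finset (ZMod N))) (phiSet (cadj N)) := by
  classical
  have hne : t ≠ t + 1 := self_ne_add_one hN t
  have heecard : ({t, t + 1} : Finset (ZMod N)).card = 2 := Finset.card_pair hne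
  have hbangF : ∀ (C : Finset (Finset (ZMod N)))
      (hc : Odd (nB ({t, t + 1} : Finset (ZMod N)) C) ∧
        ∃ I ∈ C, (I ∩ ({t, t + 1} : Finset (ZMod N))).card = 1),
      bangF ({t, t + 1} : Finset (ZMod N)) C = C.erase hc.2.choose := by
    intro C hc
    rw [bangF, dif_pos hc]
  have hbangF' : ∀ (C : Finset (Finset (ZMod N))),
      ¬ (Odd (nB ({t, t + 1} : Finset (ZMod N)) C) ∧
        ∃ I ∈ C, (I ∩ ({t, t + 1} : Finset (ZMod N))).card = 1) →
      bangF ({t, t + 1} : Finset (ZMod N)) C = C := by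
    intro C hc
    rw [bangF, dif_neg hc]
  intro B hB B' hB' hEq
  by_cases h : Odd (nB ({t, t + 1} : Finset (ZMod N)) B) ∧
      ∃ I ∈ B, (I ∩ ({t, t + 1} : Finset (ZMod N))).card = 1 <;>
    by_cases h' : Odd (nB ({t, t + 1} : Finset (ZMod N)) B') ∧
      ∃ I ∈ B', (I ∩ ({t, t + 1} : Finset (ZMod N))).card = 1
  ·
    rw [hbangF B h, hbangF B' h'] at hEq
    obtain ⟨hJB, hJc⟩ := h.2.choose_spec
    obtain ⟨hJ'B, hJ'c⟩ := h'.2.choose_spec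
    set J := h.2.choose with hJdef
    set J' := h'.2.choose with hJ'def
    by_cases hJJ' : J = J'
    · have h1 : insert J (B.erase J) = insert J' (B'.erase J') := by
        rw [hEq, hJJ']
      rwa [Finset.insert_erase hJB, Finset.insert_erase hJ'B] at h1
    · exact absurd (no_two hN hodd hB hB' hJB hJ'B hJc hJ'c hJJ' hEq h.1) (fun h => h)
  ·
    rw [hbangF B h, hbangF' B' h'] at hEq
    exfalso
    obtain ⟨hJB, hJc⟩ := h.2.choose_spec
    have hJee : ¬ ({t, t + 1} : Finset (ZMod N)) ⊆ h.2.choose :=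
      not_superset_of_card_one heecard hJc
    have hodd' : Odd (nB ({t, t + 1} : Finset (ZMod N)) B') := by
      rw [← hEq, nB_erase hJee]
      exact h.1
    apply h'
    refine ⟨hodd', ?_⟩
    have hpos : 0 < nB ({t, t + 1} : Finset (ZMod N)) B' := hodd'.pos
    obtain ⟨K, hK⟩ := Finset.card_pos.1 hpos
    rw [Finset.mem_filter] at hK
    have hsupp : (suppB B' ∩ ({t, t + 1} : Finset (ZMod N))).Nonempty := by
      refine ⟨t, Finset.mem_inter.2 ⟨?_, Finset.mem_insert_self _ _⟩⟩
      exact Finset.mem_biUnion.2 ⟨K, hK.1, hK.2 (Finset.mem_insert_self _ _)⟩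
    obtain ⟨I, hIB, hIc⟩ := exists_card_one hN hodd hB' hsupp
    exact ⟨I, hIB, hIc⟩
  ·
    rw [hbangF' B h, hbangF B' h'] at hEq
    exfalso
    obtain ⟨hJ'B, hJ'c⟩ := h'.2.choose_spec
    have hJ'ee : ¬ ({t, t + 1} : Finset (ZMod N)) ⊆ h'.2.choose :=
      not_superset_of_card_one heecard hJ'c
    have hodd' : Odd (nB ({t, t + 1} : Finset (ZMod N)) B) := by
      rw [hEq, nB_erase hJ'ee]
      exact h'.1
    apply h
    refine ⟨hodd', ?_⟩
    have hpos : 0 < nB ({t, t + 1} : Finset (ZMod N)) B := hodd'.pos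
    obtain ⟨K, hK⟩ := Finset.card_pos.1 hpos
    rw [Finset.mem_filter] at hK
    have hsupp : (suppB B ∩ ({t, t + 1} : Finset (ZMod N))).Nonempty := by
      refine ⟨t, Finset.mem_inter.2 ⟨?_, Finset.mem_insert_self _ _⟩⟩
      exact Finset.mem_biUnion.2 ⟨K, hK.1, hK.2 (Finset.mem_insert_self _ _)⟩
    obtain ⟨I, hIB, hIc⟩ := exists_card_one hN hodd hB hsupp
    exact ⟨I, hIB, hIc⟩
  ·
    rw [hbangF' B h, hbangF' B' h'] at hEq
    exact hEq

lemma main_lemma (hN : 3 ≤ N) (hodd : Odd N) (t : ZMod N) :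
    (∀ B ∈ phiSet (cadj N), (suppB B ∩ ({t, t + 1} : Finset (ZMod N))).Nonempty →
      ∃! I : Finset (ZMod N), I ∈ B ∧ (I ∩ ({t, t + 1} : Finset (ZMod N))).card = 1) ∧
    Set.InjOn (bangF ({t, t + 1} : Finset (ZMod N))) (phiSet (cadj N)) ∧
    Set.BijOn (bangF ({t, t + 1} : Finset (ZMod N))) (phiSet (cadj N))
      (omegaSet (cadj N) ({t, t + 1} : Finset (ZMod N))) := by
  have hinj := injOn_bangF hN hodd t
  refine ⟨?_, hinj, ?_⟩
  · intro B hB hsupp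
    obtain ⟨J, hJB, hJc⟩ := exists_card_one hN hodd hB hsupp
    refine ⟨J, ⟨hJB, hJc⟩, ?_⟩
    rintro I ⟨hIB, hIc⟩
    exact unique_card_one hN hodd hB hIB hIc hJB hJc
  · have : omegaSet (cadj N) ({t, t + 1} : Finset (ZMod N)) =
        (bangF ({t, t + 1} : Finset (ZMod N))) '' (phiSet (cadj N)) := rfl
    rw [this]
    exact hinj.bijOn_image

end St16

/-- for `B ∈ phi` with `supp(B) ∩ ee ≠ ∅` there is a unique `I ∈ B` with
`|I ∩ ee| = 1`; the map `B ↦ B^!` is injective on `phi`, hence a bijection onto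
`omega = {B^! : B ∈ phi}`. -/
theorem statement16 (N : ℕ) [NeZero N] (hN : 3 ≤ N) (hodd : Odd N)
    (t t' : ZMod N) (hadj : cadj N t t') :
    (∀ B ∈ phiSet (cadj N), (suppB B ∩ ({t, t'} : Finset (ZMod N))).Nonempty →
      ∃! I : Finset (ZMod N), I ∈ B ∧ (I ∩ ({t, t'} : Finset (ZMod N))).card = 1) ∧
    Set.InjOn (bangF ({t, t'} : Finset (ZMod N))) (phiSet (cadj N)) ∧
    Set.BijOn (bangF ({t, t'} : Finset (ZMod N))) (phiSet (cadj N))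
      (omegaSet (cadj N) ({t, t'} : Finset (ZMod N))) := by
  rcases hadj with h | h
  · subst h
    exact St16.main_lemma hN hodd t
  · subst h
    have hpair : ({t' + 1, t'} : Finset (ZMod N)) = ({t', t' + 1} : Finset (ZMod N)) :=
      Finset.pair_comm _ _
    rw [hpair]
    exact St16.main_lemma hN hodd t'
end

section
/- Let N ≥ 3 be odd, (S,E) the cycle of length N, Vbar = V/(F·e_S), and fix an edge ee in E. Let B in phi(Vbar). If n_B is odd, then z_ee(eps(B)) = 0; if n_B is even and n_B ≥ 2, then z_ee(eps(B)) = 1. -/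
section St18
variable {N : ℕ}

lemma st18_castInj [NeZero N] {i j : ℕ} (hi : i < N) (hj : j < N)
    (h : (i : ZMod N) = j) : i = j := by
  have := congrArg ZMod.val h
  rwa [ZMod.val_natCast, ZMod.val_natCast, Nat.mod_eq_of_lt hi, Nat.mod_eq_of_lt hj] at this

lemma st18_idxInj [NeZero N] {c : ZMod N} {i j : ℕ} (hi : i < N) (hj : j < N)
    (h : c + (i : ZMod N) = c + (j : ZMod N)) : i = j :=
  st18_castInj hi hj (add_left_cancel h)

def st18_itv (c : ZMod N) (m : ℕ) : Finset (ZMod N) :=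
  (Finset.range (m+1)).image (fun i : ℕ => c + (i : ZMod N))

lemma st18_mem_itv {c x : ZMod N} {m : ℕ} :
    x ∈ st18_itv c m ↔ ∃ i ≤ m, x = c + (i : ZMod N) := by
  simp [st18_itv, Finset.mem_image, Finset.mem_range, Nat.lt_succ_iff, eq_comm]

lemma st18_card_itv [NeZero N] {c : ZMod N} {m : ℕ} (h : m < N) :
    (st18_itv c m).card = m + 1 := by
  rw [st18_itv, Finset.card_image_of_injOn, Finset.card_range]
  intro i hi j hj hij
  simp only [Finset.mem_coe, Finset.mem_range, Nat.lt_succ_iff] at hi hj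
  exact st18_idxInj (by omega) (by omega) hij

lemma st18_cadj_symm {a b : ZMod N} (h : cadj N a b) : cadj N b a := Or.symm h

lemma st18_connOn_itv {c : ZMod N} {m : ℕ} : ConnOn (cadj N) (st18_itv c m) := by
  set r := fun a b : ZMod N => a ∈ st18_itv c m ∧ b ∈ st18_itv c m ∧ cadj N a b with hr
  have hsym : Symmetric r := fun a b h => ⟨h.2.1, h.1, st18_cadj_symm h.2.2⟩
  have key : ∀ i ≤ m, Relation.ReflTransGen r c (c + (i : ZMod N)) := by
    intro i
    induction i with
    | zero => intro _; simpa using Relation.ReflTransGen.refl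
    | succ k ih =>
      intro hk
      refine (ih (by omega)).tail ⟨?_, ?_, ?_⟩
      · exact st18_mem_itv.mpr ⟨k, by omega, rfl⟩
      · exact st18_mem_itv.mpr ⟨k + 1, hk, rfl⟩
      · exact Or.inl (by push_cast; ring)
  intro s hs u hu
  obtain ⟨i, hi, rfl⟩ := st18_mem_itv.mp hs
  obtain ⟨j, hj, rfl⟩ := st18_mem_itv.mp hu
  letI : Std.Symm r := ⟨fun a b h => hsym h⟩
  exact (Std.Symm.symm _ _ (key i hi)).trans (key j hj)

lemma st18_ladder [NeZero N] {m : ℕ} (f : Fin (m+1) → ZMod N) (d : ZMod N)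
    (hinj : Function.Injective f)
    (hbase : ∀ _h1 : 1 ≤ m, f ⟨1, by omega⟩ = f ⟨0, by omega⟩ + d)
    (hstep : ∀ i (_h2 : i + 1 ≤ m),
      f ⟨i+1, by omega⟩ = f ⟨i, by omega⟩ + d ∨ f ⟨i, by omega⟩ = f ⟨i+1, by omega⟩ + d) :
    ∀ i, (hi : i ≤ m) → f ⟨i, by omega⟩ = f ⟨0, by omega⟩ + i • d := by
  intro i
  induction i using Nat.strong_induction_on with
  | _ i ih =>
    intro hi
    rcases i with _ | i
    · simp
    rcases i with _ | k
    · simpa using hbase (by omega)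
    · have h0 := ih k (by omega) (by omega)
      have h1 := ih (k+1) (by omega) (by omega)
      rcases hstep (k+1) (by omega) with h2 | h2
      · rw [h2, h1, succ_nsmul d (k+1), add_assoc]
      · exfalso
        rw [h1, succ_nsmul] at h2
        have heq : f ⟨k+2, by omega⟩ = f ⟨k, by omega⟩ := by
          rw [h0]; linear_combination -h2
        have := hinj heq
        simp only [Fin.mk.injEq] at this
        omega

lemma st18_pathOn_itv [NeZero N] (hN : 3 ≤ N) {c : ZMod N} {m : ℕ} (h : m + 2 ≤ N) :
    IsPathOn (cadj N) (st18_itv c m) := by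
  refine ⟨m, fun i => c + ((i : ℕ) : ZMod N), ?_, ?_, ?_⟩
  · intro i j hij
    exact Fin.ext (st18_idxInj (by omega) (by omega) hij)
  · ext x
    simp only [st18_mem_itv, Finset.mem_image, Finset.mem_univ, true_and]
    constructor
    · rintro ⟨i, hi, rfl⟩; exact ⟨⟨i, by omega⟩, rfl⟩
    · rintro ⟨i, rfl⟩; exact ⟨(i : ℕ), by omega, rfl⟩
  · intro i j
    beta_reduce
    constructor
    · rintro (hc | hc)
      · left
        have : c + ((j : ℕ) : ZMod N) = c + (((i : ℕ) + 1 : ℕ) : ZMod N) := by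
          rw [hc]; push_cast; ring
        exact (st18_idxInj (by omega) (by omega) this).symm
      · right
        have : c + ((i : ℕ) : ZMod N) = c + (((j : ℕ) + 1 : ℕ) : ZMod N) := by
          rw [hc]; push_cast; ring
        exact (st18_idxInj (by omega) (by omega) this).symm
    · rintro (hc | hc)
      · exact Or.inl (by rw [← hc]; push_cast; ring)
      · exact Or.inr (by rw [← hc]; push_cast; ring)

lemma st18_exists_itv [NeZero N] (hN : 3 ≤ N) {I : Finset (ZMod N)}
    (h : IsPathOn (cadj N) I) : ∃ c m, m + 2 ≤ N ∧ I = st18_itv c m := by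
  obtain ⟨m, f, hinj, hI, hadj⟩ := h
  have hmN : m + 1 ≤ N := by
    have h1 := Finset.card_le_univ (Finset.image f Finset.univ)
    rwa [Finset.card_image_of_injective _ hinj, Finset.card_univ, Fintype.card_fin,
      ZMod.card] at h1
  rcases Nat.eq_zero_or_pos m with hm0 | hm1
  · subst hm0
    refine ⟨f 0, 0, by omega, ?_⟩
    rw [hI]
    ext x
    simp only [st18_mem_itv, Finset.mem_image, Finset.mem_univ, true_and]
    constructor
    · rintro ⟨i, rfl⟩
      exact ⟨0, le_refl 0, by rw [show i = 0 from Fin.ext (by omega)]; simp⟩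
    · rintro ⟨i, hi, rfl⟩
      interval_cases i
      exact ⟨0, by simp⟩
  · -- m ≥ 1
    have hd := (hadj ⟨0, by omega⟩ ⟨1, by omega⟩).mpr (Or.inl rfl)
    have hm1' : m + 1 = N → ((m : ℕ) : ZMod N) = -1 := by
      intro hm'
      have h0 : ((m + 1 : ℕ) : ZMod N) = 0 := by rw [hm']; exact ZMod.natCast_self N
      push_cast at h0
      linear_combination h0
    have hstep : ∀ i (_h2 : i + 1 ≤ m),
        f ⟨i+1, by omega⟩ = f ⟨i, by omega⟩ + 1 ∨ f ⟨i, by omega⟩ = f ⟨i+1, by omega⟩ + 1 :=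
      fun i h2 => (hadj ⟨i, by omega⟩ ⟨i+1, by omega⟩).mpr (Or.inl rfl)
    rcases hd with hd | hd
    · -- ascending, d = 1
      have key : ∀ i (_hi : i ≤ m), f ⟨i, by omega⟩ = f ⟨0, by omega⟩ + (i : ZMod N) := by
        intro i hi
        have := st18_ladder f 1 hinj (fun _ => hd) hstep i hi
        simpa [nsmul_eq_mul] using this
      have hmN2 : m + 2 ≤ N := by
        by_contra hcon
        have hc : cadj N (f ⟨0, by omega⟩) (f ⟨m, by omega⟩) :=
          Or.inr (by rw [key m le_rfl, hm1' (by omega)]; ring)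
        have h5 : (0 : ℕ) + 1 = m ∨ m + 1 = 0 := (hadj ⟨0, by omega⟩ ⟨m, by omega⟩).mp hc
        omega
      refine ⟨f ⟨0, by omega⟩, m, hmN2, ?_⟩
      rw [hI]; ext x
      simp only [st18_mem_itv, Finset.mem_image, Finset.mem_univ, true_and]
      constructor
      · rintro ⟨i, rfl⟩
        refine ⟨(i : ℕ), by omega, ?_⟩
        rw [← key (i : ℕ) (by omega)]
      · rintro ⟨i, hi, rfl⟩
        refine ⟨⟨i, by omega⟩, ?_⟩
        rw [key i hi]
    · -- descending, d = -1
      have hd' : f ⟨1, by omega⟩ = f ⟨0, by omega⟩ + (-1) := by linear_combination -hd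
      have key : ∀ i (_hi : i ≤ m), f ⟨i, by omega⟩ = f ⟨0, by omega⟩ - (i : ZMod N) := by
        intro i hi
        have := st18_ladder f (-1) hinj (fun _ => hd')
          (fun i h2 => by
            rcases hstep i h2 with h | h
            · exact Or.inr (by linear_combination -h)
            · exact Or.inl (by linear_combination -h)) i hi
        simpa [nsmul_eq_mul, sub_eq_add_neg] using this
      have hmN2 : m + 2 ≤ N := by
        by_contra hcon
        have hc : cadj N (f ⟨0, by omega⟩) (f ⟨m, by omega⟩) :=
          Or.inl (by rw [key m le_rfl, hm1' (by omega)]; ring)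
        have h5 : (0 : ℕ) + 1 = m ∨ m + 1 = 0 := (hadj ⟨0, by omega⟩ ⟨m, by omega⟩).mp hc
        omega
      refine ⟨f ⟨0, by omega⟩ - (m : ZMod N), m, hmN2, ?_⟩
      rw [hI]; ext x
      simp only [st18_mem_itv, Finset.mem_image, Finset.mem_univ, true_and]
      constructor
      · rintro ⟨i, rfl⟩
        refine ⟨m - (i : ℕ), by omega, ?_⟩
        rw [show f i = f ⟨0, by omega⟩ - (((i:ℕ)) : ZMod N) from key (i:ℕ) (by omega)]
        rw [Nat.cast_sub (by omega : (i:ℕ) ≤ m)]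
        ring
      · rintro ⟨i, hi, rfl⟩
        refine ⟨⟨m - i, by omega⟩, ?_⟩
        have hcs : ((m - i : ℕ) : ZMod N) = (m : ZMod N) - (i : ZMod N) := Nat.cast_sub hi
        rw [key (m - i) (by omega), hcs]
        ring

lemma st18_right_end [NeZero N] {c t : ZMod N} {m : ℕ}
    (ht : t ∈ st18_itv c m) (ht' : t + 1 ∉ st18_itv c m) : t = c + (m : ZMod N) := by
  obtain ⟨i, hi, rfl⟩ := st18_mem_itv.mp ht
  rcases Nat.lt_or_ge i m with h | h
  · exact absurd (st18_mem_itv.mpr ⟨i + 1, by omega, by push_cast; ring⟩) ht'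
  · have : i = m := by omega
    subst this; rfl

lemma st18_left_end [NeZero N] {c t : ZMod N} {m : ℕ}
    (ht : t ∈ st18_itv c m) (ht' : t - 1 ∉ st18_itv c m) : t = c := by
  obtain ⟨i, hi, rfl⟩ := st18_mem_itv.mp ht
  rcases Nat.eq_zero_or_pos i with h | h
  · subst h; simp
  · exact absurd (st18_mem_itv.mpr ⟨i - 1, by omega,
      by rw [Nat.cast_sub (by omega : 1 ≤ i)]; push_cast; ring⟩) ht'

/-- Right-ended interval at `t`, canonical form. -/
lemma st18_right_form [NeZero N] (hN : 3 ≤ N) {I : Finset (ZMod N)} {t : ZMod N}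
    (hI : IsPathOn (cadj N) I) (ht : t ∈ I) (ht' : t + 1 ∉ I) :
    ∃ m, m + 2 ≤ N ∧ I = st18_itv (t - (m : ZMod N)) m := by
  obtain ⟨c, m, hm, rfl⟩ := st18_exists_itv hN hI
  have he := st18_right_end ht ht'
  refine ⟨m, hm, ?_⟩
  have : c = t - (m : ZMod N) := by rw [he]; ring
  rw [this]

lemma st18_left_form [NeZero N] (hN : 3 ≤ N) {I : Finset (ZMod N)} {t : ZMod N}
    (hI : IsPathOn (cadj N) I) (ht : t ∈ I) (ht' : t - 1 ∉ I) :
    ∃ m, m + 2 ≤ N ∧ I = st18_itv t m := by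
  obtain ⟨c, m, hm, rfl⟩ := st18_exists_itv hN hI
  have he := st18_left_end ht ht'
  exact ⟨m, hm, by rw [he]⟩

/-- difference of two same-right-end intervals is an interval. -/
lemma st18_sdiff_right [NeZero N] {t : ZMod N} {mI mJ : ℕ}
    (hJ : mJ + 2 ≤ N) (hIJ : mI < mJ) :
    st18_itv (t - (mJ : ZMod N)) mJ \ st18_itv (t - (mI : ZMod N)) mI =
      st18_itv (t - (mJ : ZMod N)) (mJ - mI - 1) := by
  have hbase : ∀ j : ℕ, t - (mI : ZMod N) + (j : ZMod N)
      = t - (mJ : ZMod N) + ((mJ - mI + j : ℕ) : ZMod N) := by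
    intro j
    rw [Nat.cast_add, Nat.cast_sub hIJ.le]
    ring
  ext x
  simp only [Finset.mem_sdiff, st18_mem_itv]
  constructor
  · rintro ⟨⟨k, hk, rfl⟩, hnot⟩
    refine ⟨k, ?_, rfl⟩
    by_contra hcon
    exact hnot ⟨k - (mJ - mI), by omega, by rw [hbase]; congr 1; congr 1; omega⟩
  · rintro ⟨k, hk, rfl⟩
    refine ⟨⟨k, by omega, rfl⟩, ?_⟩
    rintro ⟨j, hj, hx⟩
    rw [hbase j] at hx
    have := st18_idxInj (by omega) (by omega) hx
    omega

/-- difference of two same-left-end intervals is an interval. -/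
lemma st18_sdiff_left [NeZero N] {c : ZMod N} {mI mJ : ℕ}
    (hJ : mJ + 2 ≤ N) (hIJ : mI < mJ) :
    st18_itv c mJ \ st18_itv c mI =
      st18_itv (c + ((mI + 1 : ℕ) : ZMod N)) (mJ - mI - 1) := by
  have hbase : ∀ j : ℕ, c + ((mI + 1 : ℕ) : ZMod N) + (j : ZMod N)
      = c + ((mI + 1 + j : ℕ) : ZMod N) := by intro j; push_cast; ring
  ext x
  simp only [Finset.mem_sdiff, st18_mem_itv]
  constructor
  · rintro ⟨⟨k, hk, rfl⟩, hnot⟩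
    have hklb : mI < k := by
      by_contra hcon
      exact hnot ⟨k, by omega, rfl⟩
    refine ⟨k - mI - 1, by omega, ?_⟩
    rw [hbase]; congr 1; congr 1; omega
  · rintro ⟨j, hj, rfl⟩
    rw [hbase j]
    refine ⟨⟨mI + 1 + j, by omega, rfl⟩, ?_⟩
    rintro ⟨k, hk, hx⟩
    have := st18_idxInj (by omega) (by omega) hx.symm
    omega

/-- two intervals with a one-vertex gap are disjoint... -/
lemma st18_disj_pair [NeZero N] {c : ZMod N} {p q : ℕ} (h : p + q + 4 ≤ N) :
    st18_itv c p ∩ st18_itv (c + ((p + 2 : ℕ) : ZMod N)) q = ∅ := by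
  rw [Finset.eq_empty_iff_forall_notMem]
  intro x hx
  obtain ⟨h1, h2⟩ := Finset.mem_inter.mp hx
  obtain ⟨i, hi, rfl⟩ := st18_mem_itv.mp h1
  obtain ⟨j, hj, hx2⟩ := st18_mem_itv.mp h2
  rw [show c + ((p+2:ℕ) : ZMod N) + (j : ZMod N) = c + ((p+2+j : ℕ) : ZMod N) by
    push_cast; ring] at hx2
  have := st18_idxInj (by omega) (by omega) hx2
  omega

/-- ...and their union is disconnected. -/
lemma st18_not_connOn_pair [NeZero N] {c : ZMod N} {p q : ℕ} (h : p + q + 4 ≤ N) :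
    ¬ ConnOn (cadj N) (st18_itv c p ∪ st18_itv (c + ((p + 2 : ℕ) : ZMod N)) q) := by
  intro hcon
  set U := st18_itv c p ∪ st18_itv (c + ((p + 2 : ℕ) : ZMod N)) q with hU
  have h1 : c ∈ U := Finset.mem_union_left _ (st18_mem_itv.mpr ⟨0, by omega, by simp⟩)
  have h2 : c + ((p + 2 : ℕ) : ZMod N) ∈ U :=
    Finset.mem_union_right _ (st18_mem_itv.mpr ⟨0, by omega, by simp⟩)
  have hreach := hcon c h1 _ h2
  have key : ∀ x, Relation.ReflTransGen (fun a b => a ∈ U ∧ b ∈ U ∧ cadj N a b) c x →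
      x ∈ st18_itv c p := by
    intro x hx
    induction hx with
    | refl => exact st18_mem_itv.mpr ⟨0, by omega, by simp⟩
    | tail hab hbc ih =>
      obtain ⟨hbU, hxU, hadj⟩ := hbc
      obtain ⟨i, hi, rfl⟩ := st18_mem_itv.mp ih
      rcases Finset.mem_union.mp hxU with hx1 | hx2
      · exact hx1
      · exfalso
        obtain ⟨j, hj, hxe⟩ := st18_mem_itv.mp hx2
        rw [show c + ((p+2:ℕ) : ZMod N) + (j : ZMod N) = c + ((p+2+j : ℕ) : ZMod N) by
          push_cast; ring] at hxe
        rcases hadj with ha | ha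
        · rw [hxe, show c + ((i:ℕ) : ZMod N) + 1 = c + ((i+1 : ℕ) : ZMod N) by
            push_cast; ring] at ha
          have := st18_idxInj (by omega) (by omega) ha
          omega
        · rw [hxe] at ha
          rw [show c + ((p+2+j:ℕ) : ZMod N) + 1 = c + ((p+3+j : ℕ) : ZMod N) by
            push_cast; ring] at ha
          have := st18_idxInj (by omega) (by omega) ha
          omega
  have hfin := key _ hreach
  obtain ⟨i, hi, he⟩ := st18_mem_itv.mp hfin
  have := st18_idxInj (by omega) (by omega) he
  omega

/-- erasing an interior vertex gives two gapped intervals. -/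
lemma st18_erase_itv [NeZero N] {c : ZMod N} {m r : ℕ}
    (hm : m + 2 ≤ N) (hr1 : 1 ≤ r) (hr2 : r ≤ m - 1) :
    (st18_itv c m).erase (c + (r : ZMod N)) =
      st18_itv c (r - 1) ∪ st18_itv (c + ((r + 1 : ℕ) : ZMod N)) (m - r - 1) := by
  have hbase : ∀ j : ℕ, c + ((r + 1 : ℕ) : ZMod N) + (j : ZMod N)
      = c + ((r + 1 + j : ℕ) : ZMod N) := by intro j; push_cast; ring
  ext x
  simp only [Finset.mem_erase, Finset.mem_union, st18_mem_itv]
  constructor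
  · rintro ⟨hne, i, hi, rfl⟩
    have hir : i ≠ r := fun h => hne (by rw [h])
    rcases Nat.lt_or_ge i r with h | h
    · exact Or.inl ⟨i, by omega, rfl⟩
    · refine Or.inr ⟨i - r - 1, by omega, ?_⟩
      rw [hbase]; congr 1; congr 1; omega
  · rintro (⟨i, hi, rfl⟩ | ⟨j, hj, rfl⟩)
    · refine ⟨?_, i, by omega, rfl⟩
      intro hx
      have := st18_idxInj (by omega) (by omega) hx
      omega
    · rw [hbase j]
      refine ⟨?_, r + 1 + j, by omega, rfl⟩
      intro hx
      have := st18_idxInj (by omega) (by omega) hx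
      omega

def st18_aS (t : ZMod N) (B : Finset (Finset (ZMod N))) : Finset (Finset (ZMod N)) :=
  B.filter (fun I => t ∈ I ∧ t + 1 ∉ I)

def st18_bS (t : ZMod N) (B : Finset (Finset (ZMod N))) : Finset (Finset (ZMod N)) :=
  B.filter (fun I => t + 1 ∈ I ∧ t ∉ I)

lemma st18_right_prec_false [NeZero N] (hN : 3 ≤ N) {I J : Finset (ZMod N)} {t : ZMod N}
    (hI : CalI1 (cadj N) I) (hJ : CalI1 (cadj N) J)
    (htI : t ∈ I) (htI' : t + 1 ∉ I) (htJ : t ∈ J) (htJ' : t + 1 ∉ J)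
    (hp : Prec (cadj N) I J) : False := by
  obtain ⟨mI, hmI, rfl⟩ := st18_right_form hN hI.1 htI htI'
  obtain ⟨mJ, hmJ, rfl⟩ := st18_right_form hN hJ.1 htJ htJ'
  have hcard := Finset.card_lt_card hp.1
  rw [st18_card_itv (by omega), st18_card_itv (by omega)] at hcard
  refine hp.2 ?_
  rw [st18_sdiff_right hmJ (by omega)]
  exact st18_connOn_itv

lemma st18_left_prec_false [NeZero N] (hN : 3 ≤ N) {I J : Finset (ZMod N)} {s : ZMod N}
    (hI : CalI1 (cadj N) I) (hJ : CalI1 (cadj N) J)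
    (htI : s ∈ I) (htI' : s - 1 ∉ I) (htJ : s ∈ J) (htJ' : s - 1 ∉ J)
    (hp : Prec (cadj N) I J) : False := by
  obtain ⟨mI, hmI, rfl⟩ := st18_left_form hN hI.1 htI htI'
  obtain ⟨mJ, hmJ, rfl⟩ := st18_left_form hN hJ.1 htJ htJ'
  have hcard := Finset.card_lt_card hp.1
  rw [st18_card_itv (by omega), st18_card_itv (by omega)] at hcard
  refine hp.2 ?_
  rw [st18_sdiff_left hmJ (by omega)]
  exact st18_connOn_itv

lemma st18_aS_card [NeZero N] (hN : 3 ≤ N) {t : ZMod N} {B : Finset (Finset (ZMod N))}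
    (hB : B ∈ phiSet (cadj N)) : (st18_aS t B).card ≤ 1 := by
  rw [Finset.card_le_one]
  intro I hI J hJ
  obtain ⟨hIB, htI, htI'⟩ := Finset.mem_filter.mp hI
  obtain ⟨hJB, htJ, htJ'⟩ := Finset.mem_filter.mp hJ
  rcases hB.2.1 I hIB J hJB with h | h | h | h
  · exact h
  · exfalso
    have := Finset.mem_inter.mpr ⟨htI, htJ⟩
    rw [h.1] at this
    exact Finset.notMem_empty t this
  · exact absurd h (fun h => st18_right_prec_false hN (hB.1 I hIB) (hB.1 J hJB)
      htI htI' htJ htJ' h)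
  · exact absurd h (fun h => st18_right_prec_false hN (hB.1 J hJB) (hB.1 I hIB)
      htJ htJ' htI htI' h)

lemma st18_bS_card [NeZero N] (hN : 3 ≤ N) {t : ZMod N} {B : Finset (Finset (ZMod N))}
    (hB : B ∈ phiSet (cadj N)) : (st18_bS t B).card ≤ 1 := by
  rw [Finset.card_le_one]
  intro I hI J hJ
  obtain ⟨hIB, htI, htI'⟩ := Finset.mem_filter.mp hI
  obtain ⟨hJB, htJ, htJ'⟩ := Finset.mem_filter.mp hJ
  have hs : t + 1 - 1 = t := by ring
  rcases hB.2.1 I hIB J hJB with h | h | h | h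
  · exact h
  · exfalso
    have := Finset.mem_inter.mpr ⟨htI, htJ⟩
    rw [h.1] at this
    exact Finset.notMem_empty _ this
  · exact absurd h (fun h => st18_left_prec_false hN (hB.1 I hIB) (hB.1 J hJB)
      htI (by rw [hs]; exact htI') htJ (by rw [hs]; exact htJ') h)
  · exact absurd h (fun h => st18_left_prec_false hN (hB.1 J hJB) (hB.1 I hIB)
      htJ (by rw [hs]; exact htJ') htI (by rw [hs]; exact htI') h)

lemma st18_not_both [NeZero N] (hN : 3 ≤ N) {t : ZMod N} {B : Finset (Finset (ZMod N))}
    (hB : B ∈ phiSet (cadj N)) {I J : Finset (ZMod N)}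
    (hIa : I ∈ st18_aS t B) (hJb : J ∈ st18_bS t B) : False := by
  obtain ⟨hIB, htI, htI'⟩ := Finset.mem_filter.mp hIa
  obtain ⟨hJB, htJ, htJ'⟩ := Finset.mem_filter.mp hJb
  rcases hB.2.1 I hIB J hJB with h | h | h | h
  · exact htJ' (h ▸ htI)
  · -- Spade: but the union is a connected interval
    obtain ⟨mI, hmI, hIe⟩ := st18_right_form hN (hB.1 I hIB).1 htI htI'
    have hs : t + 1 - 1 = t := by ring
    obtain ⟨mJ, hmJ, hJe⟩ := st18_left_form hN (hB.1 J hJB).1 htJ (by rw [hs]; exact htJ')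
    refine h.2 ?_
    have hu : I ∪ J = st18_itv (t - (mI : ZMod N)) (mI + mJ + 1) := by
      rw [hIe, hJe]
      ext x
      simp only [Finset.mem_union, st18_mem_itv]
      constructor
      · rintro (⟨i, hi, rfl⟩ | ⟨j, hj, rfl⟩)
        · exact ⟨i, by omega, rfl⟩
        · exact ⟨mI + 1 + j, by omega, by push_cast; ring⟩
      · rintro ⟨k, hk, rfl⟩
        rcases Nat.lt_or_ge mI k with h | h
        · refine Or.inr ⟨k - mI - 1, by omega, ?_⟩
          rw [show ((k : ℕ) : ZMod N) = ((mI + 1 + (k - mI - 1) : ℕ) : ZMod N) by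
            congr 1; omega]
          push_cast; ring
        · exact Or.inl ⟨k, h, rfl⟩
    rw [hu]
    exact st18_connOn_itv
  · exact htJ' (h.1.subset htI)
  · exact htI' (h.1.subset htJ)

lemma st18_exists_ab [NeZero N] (hN : 3 ≤ N) {t : ZMod N} {B : Finset (Finset (ZMod N))}
    (hB : B ∈ phiSet (cadj N))
    (hn : (B.filter (fun I => t ∈ I ∧ t + 1 ∈ I)).Nonempty) :
    (st18_aS t B).Nonempty ∨ (st18_bS t B).Nonempty := by
  classical
  obtain ⟨I₁, hI₁, hmin⟩ := Finset.exists_min_image _ Finset.card hn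
  obtain ⟨hI₁B, ht, ht'⟩ := Finset.mem_filter.mp hI₁
  have hcal := hB.1 I₁ hI₁B
  obtain ⟨c, m, hm, rfl⟩ := st18_exists_itv hN hcal.1
  have hoddm : Odd (m + 1) := by
    have h2 := hcal.2
    rwa [st18_card_itv (by omega)] at h2
  obtain ⟨k2, hk2⟩ := hoddm
  obtain ⟨p, hp, hpt⟩ := st18_mem_itv.mp ht
  obtain ⟨q, hq, hqt⟩ := st18_mem_itv.mp ht'
  have hqp : q = p + 1 := by
    have heq : c + ((q : ℕ) : ZMod N) = c + (((p + 1 : ℕ)) : ZMod N) := by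
      rw [← hqt, hpt]; push_cast; ring
    exact st18_idxInj (by omega) (by omega) heq
  have hpm : p + 1 ≤ m := by omega
  set r := if p % 2 = 1 then p else p + 1 with hrdef
  have hr2 : r % 2 = 1 := by
    rcases Nat.even_or_odd p with h | h
    · rw [Nat.even_iff] at h; simp [hrdef, h]; omega
    · rw [Nat.odd_iff] at h; simp [hrdef, h]
  have hrp : r = p ∨ r = p + 1 := by
    by_cases h : p % 2 = 1 <;> simp [hrdef, h]
  have hr1 : 1 ≤ r := by omega
  have hrm : r ≤ m - 1 := by
    rcases hrp with h | h <;> omega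
  have hv : c + ((r : ℕ) : ZMod N) = t ∨ c + ((r : ℕ) : ZMod N) = t + 1 := by
    rcases hrp with h | h
    · left; rw [h, hpt]
    · right; rw [h, hqt, hqp]
  have hIev : c + ((r : ℕ) : ZMod N) ∈ Iev (cadj N) (st18_itv c m) := by
    refine ⟨st18_mem_itv.mpr ⟨r, by omega, rfl⟩,
      st18_itv c (r - 1), st18_itv (c + ((r + 1 : ℕ) : ZMod N)) (m - r - 1),
      ⟨st18_pathOn_itv hN (by omega), ?_⟩,
      ⟨st18_pathOn_itv hN (by omega), ?_⟩, ⟨?_, ?_⟩, ?_⟩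
    · rw [st18_card_itv (by omega)]
      exact Nat.odd_iff.mpr (by omega)
    · rw [st18_card_itv (by omega)]
      exact Nat.odd_iff.mpr (by omega)
    · have h := st18_disj_pair (c := c) (p := r - 1) (q := m - r - 1) (by omega)
      rwa [show r - 1 + 2 = r + 1 from by omega] at h
    · have h := st18_not_connOn_pair (c := c) (p := r - 1) (q := m - r - 1) (by omega)
      rwa [show r - 1 + 2 = r + 1 from by omega] at h
    · exact st18_erase_itv hm hr1 hrm
  obtain ⟨k, f, hf, hdisj, hsub⟩ := hB.2.2 _ hI₁B
  have hvU := hsub hIev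
  rw [Set.mem_iUnion] at hvU
  obtain ⟨j, hvj⟩ := hvU
  rw [Finset.mem_coe] at hvj
  have hJB := (hf j).1
  have hJss : f j ⊂ st18_itv c m := (hf j).2.1
  have hJne : ¬ (t ∈ f j ∧ t + 1 ∈ f j) := by
    intro hc
    have hmem : f j ∈ B.filter (fun I => t ∈ I ∧ t + 1 ∈ I) :=
      Finset.mem_filter.mpr ⟨hJB, hc⟩
    have h1 := hmin _ hmem
    have h2 := Finset.card_lt_card hJss
    omega
  rcases hv with h | h
  · exact Or.inl ⟨f j, Finset.mem_filter.mpr ⟨hJB, h ▸ hvj, fun hc => hJne ⟨h ▸ hvj, hc⟩⟩⟩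
  · exact Or.inr ⟨f j, Finset.mem_filter.mpr ⟨hJB, h ▸ hvj, fun hc => hJne ⟨hc, h ▸ hvj⟩⟩⟩

lemma st18_nB_eq [NeZero N] (t : ZMod N) (B : Finset (Finset (ZMod N))) :
    nB ({t, t + 1} : Finset (ZMod N)) B = (B.filter (fun I => t ∈ I ∧ t + 1 ∈ I)).card := by
  rw [nB]
  congr 1
  ext I
  simp [Finset.insert_subset_iff]

lemma st18_gs_eq_a [NeZero N] (t : ZMod N) (B : Finset (Finset (ZMod N))) :
    gs B t = (B.filter (fun I => t ∈ I ∧ t + 1 ∈ I)).card + (st18_aS t B).card := by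
  classical
  have h := Finset.card_filter_add_card_filter_not
    (s := B.filter (fun I => t ∈ I)) (p := fun I => t + 1 ∈ I)
  rw [Finset.filter_filter, Finset.filter_filter] at h
  rw [gs, ← h, st18_aS]

lemma st18_gs_eq_b [NeZero N] (t : ZMod N) (B : Finset (Finset (ZMod N))) :
    gs B (t + 1) = (B.filter (fun I => t ∈ I ∧ t + 1 ∈ I)).card + (st18_bS t B).card := by
  classical
  have h := Finset.card_filter_add_card_filter_not
    (s := B.filter (fun I => t + 1 ∈ I)) (p := fun I => t ∈ I)
  rw [Finset.filter_filter, Finset.filter_filter] at h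
  have h2 : B.filter (fun I => t + 1 ∈ I ∧ t ∈ I) = B.filter (fun I => t ∈ I ∧ t + 1 ∈ I) := by
    ext I; simp [and_comm]
  rw [h2] at h
  rw [gs, ← h, st18_bS]

lemma st18_gs_vals [NeZero N] (hN : 3 ≤ N) (t : ZMod N) (B : Finset (Finset (ZMod N)))
    (hB : B ∈ phiSet (cadj N)) (hn : 1 ≤ nB ({t, t + 1} : Finset (ZMod N)) B) :
    (gs B t = nB ({t, t + 1} : Finset (ZMod N)) B + 1 ∧
      gs B (t + 1) = nB ({t, t + 1} : Finset (ZMod N)) B) ∨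
    (gs B t = nB ({t, t + 1} : Finset (ZMod N)) B ∧
      gs B (t + 1) = nB ({t, t + 1} : Finset (ZMod N)) B + 1) := by
  have hnne : (B.filter (fun I => t ∈ I ∧ t + 1 ∈ I)).Nonempty := by
    rw [← Finset.card_pos, ← st18_nB_eq]
    omega
  have ha := st18_aS_card hN (t := t) hB
  have hb := st18_bS_card hN (t := t) hB
  rcases st18_exists_ab hN hB hnne with hne | hne
  · left
    have hb0 : st18_bS t B = ∅ := by
      rw [Finset.eq_empty_iff_forall_notMem]
      exact fun J hJ => st18_not_both hN hB hne.choose_spec hJ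
    have ha1 : (st18_aS t B).card = 1 := by
      have := Finset.card_pos.mpr hne
      omega
    rw [st18_gs_eq_a, st18_gs_eq_b, st18_nB_eq, ha1, hb0]
    simp
  · right
    have ha0 : st18_aS t B = ∅ := by
      rw [Finset.eq_empty_iff_forall_notMem]
      exact fun J hJ => st18_not_both hN hB hJ hne.choose_spec
    have hb1 : (st18_bS t B).card = 1 := by
      have := Finset.card_pos.mpr hne
      omega
    rw [st18_gs_eq_a, st18_gs_eq_b, st18_nB_eq, hb1, ha0]
    simp

lemma st18_zee_ebar [NeZero N] (t t' s : ZMod N) :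
    zee N t t' (ebar N s) = (if t = s then 1 else 0) + (if t' = s then 1 else 0) := by
  rw [ebar, piQ, Submodule.mkQ_apply, zee, Submodule.liftQ_apply]
  simp [zeeV, eVec, Pi.single_apply]

lemma st18_zee_eps [NeZero N] (t t' : ZMod N) (B : Finset (Finset (ZMod N))) :
    zee N t t' (epsB (ebar N) B) =
      ((gs B t * (gs B t + 1) / 2 : ℕ) : ZMod 2) +
      ((gs B t' * (gs B t' + 1) / 2 : ℕ) : ZMod 2) := by
  rw [epsB, map_sum]
  simp only [map_smul, st18_zee_ebar, smul_eq_mul]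
  rw [show ∀ f : ZMod N → ZMod 2, (∑ s : ZMod N, f s * ((if t = s then 1 else 0) +
      (if t' = s then 1 else 0))) = (∑ s : ZMod N, if t = s then f s else 0) +
      (∑ s : ZMod N, if t' = s then f s else 0) from fun f => by
    rw [← Finset.sum_add_distrib]
    refine Finset.sum_congr rfl fun s _ => by
      by_cases h1 : t = s <;> by_cases h2 : t' = s <;> simp [h1, h2] <;> ring]
  rw [Finset.sum_ite_eq, Finset.sum_ite_eq]
  simp

lemma st18_tri (n : ℕ) :
    ((n * (n + 1) / 2 : ℕ) : ZMod 2) + (((n + 1) * (n + 1 + 1) / 2 : ℕ) : ZMod 2)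
      = ((n + 1 : ℕ) : ZMod 2) := by
  have hu' : n * (n + 1) = 2 * (n * (n + 1) / 2) := by
    obtain ⟨u, hu⟩ := Nat.even_mul_succ_self n
    omega
  have hw' : (n + 1) * (n + 1 + 1) = 2 * ((n + 1) * (n + 1 + 1) / 2) := by
    obtain ⟨w, hw⟩ := Nat.even_mul_succ_self (n + 1)
    omega
  have h1 : n * (n + 1) / 2 + (n + 1) * (n + 1 + 1) / 2 = (n + 1) * (n + 1) := by
    have h3 : n * (n + 1) + (n + 1) * (n + 1 + 1) = 2 * ((n + 1) * (n + 1)) := by ring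
    omega
  calc ((n * (n + 1) / 2 : ℕ) : ZMod 2) + (((n + 1) * (n + 1 + 1) / 2 : ℕ) : ZMod 2)
      = ((n * (n + 1) / 2 + (n + 1) * (n + 1 + 1) / 2 : ℕ) : ZMod 2) := by push_cast; ring
    _ = (((n + 1) * (n + 1) : ℕ) : ZMod 2) := by rw [h1]
    _ = ((n + 1 : ℕ) : ZMod 2) * ((n + 1 : ℕ) : ZMod 2) := by push_cast; ring
    _ = ((n + 1 : ℕ) : ZMod 2) := by
        have hx : ∀ x : ZMod 2, x * x = x := by decide
        exact hx _
lemma st18_cast_even {n : ℕ} (h : n % 2 = 0) : ((n : ℕ) : ZMod 2) = 0 := by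
  rw [show n = 2 * (n / 2) from by omega]
  push_cast
  rw [show (2 : ZMod 2) = 0 from by decide]
  ring

lemma st18_cast_odd {n : ℕ} (h : n % 2 = 1) : ((n : ℕ) : ZMod 2) = 1 := by
  rw [show n = 2 * (n / 2) + 1 from by omega]
  push_cast
  rw [show (2 : ZMod 2) = 0 from by decide]
  ring

lemma st18_main [NeZero N] (hN : 3 ≤ N) (t : ZMod N) (B : Finset (Finset (ZMod N)))
    (hB : B ∈ phiSet (cadj N)) :
    (Odd (nB ({t, t + 1} : Finset (ZMod N)) B) → zee N t (t + 1) (epsB (ebar N) B) = 0) ∧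
    (Even (nB ({t, t + 1} : Finset (ZMod N)) B) → 2 ≤ nB ({t, t + 1} : Finset (ZMod N)) B →
      zee N t (t + 1) (epsB (ebar N) B) = 1) := by
  by_cases hn0 : nB ({t, t + 1} : Finset (ZMod N)) B = 0
  · refine ⟨fun h => ?_, fun _ h2 => ?_⟩
    · rw [hn0] at h; norm_num at h
    · omega
  · have hv := st18_gs_vals hN t B hB (by omega)
    have hz := st18_zee_eps t (t + 1) B
    set n := nB ({t, t + 1} : Finset (ZMod N)) B with hn
    have hkey : zee N t (t + 1) (epsB (ebar N) B) = ((n + 1 : ℕ) : ZMod 2) := by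
      rcases hv with ⟨h1, h2⟩ | ⟨h1, h2⟩
      · rw [hz, h1, h2, add_comm]
        exact st18_tri n
      · rw [hz, h1, h2]
        exact st18_tri n
    refine ⟨fun hodd => ?_, fun heven _ => ?_⟩
    · rw [hkey]
      rw [Nat.odd_iff] at hodd
      exact st18_cast_even (by omega)
    · rw [hkey]
      rw [Nat.even_iff] at heven
      exact st18_cast_odd (by omega)

lemma st18_zee_comm [NeZero N] (t t' : ZMod N) (v : VbarN N) :
    zee N t t' v = zee N t' t v := by
  obtain ⟨w, rfl⟩ := Submodule.mkQ_surjective (radN N) v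
  rw [Submodule.mkQ_apply, zee, zee, Submodule.liftQ_apply, Submodule.liftQ_apply]
  simp only [zeeV, LinearMap.add_apply, LinearMap.proj_apply]
  exact add_comm _ _

end St18

/-- if `n_B` is odd then `z_ee(eps(B)) = 0`; if `n_B` is even and
`n_B ≥ 2` then `z_ee(eps(B)) = 1`. -/
theorem statement18 (N : ℕ) [NeZero N] (hN : 3 ≤ N) (hodd : Odd N)
    (t t' : ZMod N) (hadj : cadj N t t')
    (B : Finset (Finset (ZMod N))) (hB : B ∈ phiSet (cadj N)) :
    (Odd (nB ({t, t'} : Finset (ZMod N)) B) → zee N t t' (epsB (ebar N) B) = 0) ∧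
    (Even (nB ({t, t'} : Finset (ZMod N)) B) → 2 ≤ nB ({t, t'} : Finset (ZMod N)) B →
      zee N t t' (epsB (ebar N) B) = 1) := by
  rcases hadj with h | h
  · subst h
    exact st18_main hN t B hB
  · subst h
    rw [Finset.pair_comm, st18_zee_comm]
    exact st18_main hN t' B hB
end

section
/- Let N ≥ 3 be odd, (S,E) the cycle of length N, Vbar = V/(F·e_S), and fix an edge ee in E. Let B in omega(Vbar). Then z_ee('eps(B)) = 0 (i.e. 'eps(B) lies in Vbar^+) if and only if |I ∩ ee| is 0 or 2 for every I in B. -/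
section Aux

open Relation

lemma rtg_nat (r : ℕ → ℕ → Prop) :
    ∀ (d i j : ℕ), i + d = j → (∀ k, i ≤ k → k < j → r k (k+1)) →
    Relation.ReflTransGen r i j := by
  intro d
  induction d with
  | zero =>
    intro i j h _
    have : i = j := by omega
    rw [this]
  | succ d ih =>
    intro i j h hstep
    have h1 : Relation.ReflTransGen r i (i + d) :=
      ih i (i + d) rfl (fun k hk hk' => hstep k hk (by omega))
    have h2 : r (i + d) (i + d + 1) := hstep (i + d) (by omega) (by omega)
    have : i + d + 1 = j := h
    rw [← this]
    exact h1.tail h2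

lemma nat_rtg_between (P : ℕ → Prop) {i j : ℕ}
    (h : Relation.ReflTransGen (fun a b => P a ∧ P b ∧ (a + 1 = b ∨ b + 1 = a)) i j)
    (hPi : P i) : ∀ k, ((i ≤ k ∧ k ≤ j) ∨ (j ≤ k ∧ k ≤ i)) → P k := by
  induction h with
  | refl =>
      intro k hk
      have hki : k = i := by omega
      rw [hki]
      exact hPi
  | @tail b c hib hbc ih =>
      intro k hk
      by_cases hkc : k = c
      · rw [hkc]; exact hbc.2.1
      · exact ih k (by rcases hbc.2.2 with h' | h' <;> omega)

lemma connOn_of_idx {St : Type} [DecidableEq St] (adj : St → St → Prop) (hsym : Symmetric adj)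
    (m : ℕ) (f : Fin (m+1) → St)
    (hadj : ∀ i j : Fin (m+1), adj (f i) (f j) ↔ ((i : ℕ) + 1 = (j : ℕ) ∨ (j : ℕ) + 1 = (i : ℕ)))
    (W : Finset St) (a b : ℕ) (hbm : b ≤ m)
    (hmem : ∀ i : Fin (m+1), a ≤ (i : ℕ) → (i : ℕ) ≤ b → f i ∈ W)
    (hWsub : ∀ x ∈ W, ∃ i : Fin (m+1), a ≤ (i : ℕ) ∧ (i : ℕ) ≤ b ∧ f i = x) :
    ConnOn adj W := by
  set F : ℕ → St := fun k => f ⟨min k m, Nat.lt_succ_of_le (Nat.min_le_right k m)⟩ with hF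
  have hFi : ∀ i : Fin (m+1), F (i : ℕ) = f i := by
    intro i
    apply congrArg f
    apply Fin.ext
    simp [Nat.min_eq_left (Nat.le_of_lt_succ i.isLt)]
  have aux : ∀ k l : ℕ, a ≤ k → k ≤ l → l ≤ b →
      Relation.ReflTransGen (fun u v => u ∈ W ∧ v ∈ W ∧ adj u v) (F k) (F l) := by
    intro k l hak hkl hlb
    have h1 : Relation.ReflTransGen
        (fun u v : ℕ => F u ∈ W ∧ F v ∈ W ∧ adj (F u) (F v)) k l := by
      apply rtg_nat _ (l - k) k l (by omega)
      intro kk h1 h2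
      have hk1 : kk < m + 1 := by omega
      have hk2 : kk + 1 < m + 1 := by omega
      have e1 : F kk = f ⟨kk, hk1⟩ := hFi ⟨kk, hk1⟩
      have e2 : F (kk+1) = f ⟨kk+1, hk2⟩ := hFi ⟨kk+1, hk2⟩
      rw [e1, e2]
      exact ⟨hmem ⟨kk, hk1⟩ (show a ≤ kk by omega) (show kk ≤ b by omega),
        hmem ⟨kk+1, hk2⟩ (show a ≤ kk + 1 by omega) (show kk + 1 ≤ b by omega),
        (hadj ⟨kk, hk1⟩ ⟨kk+1, hk2⟩).mpr (Or.inl rfl)⟩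
    exact Relation.ReflTransGen.lift F (fun u v h => h) _ _ h1
  intro x hx y hy
  obtain ⟨i, hai, hib, hfx⟩ := hWsub x hx
  obtain ⟨j, haj, hjb, hfy⟩ := hWsub y hy
  have hsymW : Symmetric (fun u v : St => u ∈ W ∧ v ∈ W ∧ adj u v) :=
    fun u v h => ⟨h.2.1, h.1, hsym h.2.2⟩
  rcases le_total (i : ℕ) (j : ℕ) with hle | hle
  · have := aux (i : ℕ) (j : ℕ) hai hle hjb
    rw [hFi i, hFi j, hfx, hfy] at this
    exact this
  · have := aux (j : ℕ) (i : ℕ) haj hle hib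
    rw [hFi i, hFi j, hfx, hfy] at this
    exact (@Relation.ReflTransGen.symmetric _ _ ⟨fun a b h => hsymW h⟩).symm _ _ this

lemma connOn_of_path {St : Type} [DecidableEq St] {adj : St → St → Prop} (hsym : Symmetric adj)
    {I : Finset St} (h : IsPathOn adj I) : ConnOn adj I := by
  obtain ⟨m, f, hf, him, hadj⟩ := h
  apply connOn_of_idx adj hsym m f hadj I 0 m le_rfl
  · intro i _ _
    rw [him]
    exact Finset.mem_image_of_mem f (Finset.mem_univ i)
  · intro x hx
    rw [him] at hx
    obtain ⟨i, -, rfl⟩ := Finset.mem_image.mp hx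
    exact ⟨i, Nat.zero_le _, Nat.le_of_lt_succ i.isLt, rfl⟩

lemma connOn_union {St : Type} [DecidableEq St] {adj : St → St → Prop}
    {I I' : Finset St} (hI : ConnOn adj I) (hI' : ConnOn adj I')
    {s s' : St} (hs : s ∈ I) (hs' : s' ∈ I') (hss' : adj s s') (hss'2 : adj s' s) :
    ConnOn adj (I ∪ I') := by
  have mono1 : ∀ {x y : St}, Relation.ReflTransGen (fun a b => a ∈ I ∧ b ∈ I ∧ adj a b) x y →
      Relation.ReflTransGen (fun a b => a ∈ I ∪ I' ∧ b ∈ I ∪ I' ∧ adj a b) x y :=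
    fun h => Relation.ReflTransGen.mono
      (fun a b hab => ⟨Finset.mem_union_left _ hab.1, Finset.mem_union_left _ hab.2.1, hab.2.2⟩) _ _ h
  have mono2 : ∀ {x y : St}, Relation.ReflTransGen (fun a b => a ∈ I' ∧ b ∈ I' ∧ adj a b) x y →
      Relation.ReflTransGen (fun a b => a ∈ I ∪ I' ∧ b ∈ I ∪ I' ∧ adj a b) x y :=
    fun h => Relation.ReflTransGen.mono
      (fun a b hab => ⟨Finset.mem_union_right _ hab.1, Finset.mem_union_right _ hab.2.1, hab.2.2⟩) _ _ h
  intro x hx y hy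
  rcases Finset.mem_union.mp hx with hx' | hx' <;> rcases Finset.mem_union.mp hy with hy' | hy'
  · exact mono1 (hI x hx' y hy')
  · exact ((mono1 (hI x hx' s hs)).tail
      ⟨Finset.mem_union_left _ hs, Finset.mem_union_right _ hs', hss'⟩).trans
      (mono2 (hI' s' hs' y hy'))
  · exact ((mono2 (hI' x hx' s' hs')).tail
      ⟨Finset.mem_union_right _ hs', Finset.mem_union_left _ hs, hss'2⟩).trans
      (mono1 (hI s hs y hy'))
  · exact mono2 (hI' x hx' y hy')

lemma rtg_idx {St : Type} [DecidableEq St] (adj : St → St → Prop) (m : ℕ)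
    (f : Fin (m+1) → St) (hf : Function.Injective f) (I' : Finset St)
    (him : I' = Finset.image f Finset.univ)
    (hadj : ∀ i j : Fin (m+1), adj (f i) (f j) ↔ ((i : ℕ) + 1 = (j : ℕ) ∨ (j : ℕ) + 1 = (i : ℕ)))
    (I : Finset St) (hsub : I ⊆ I') {x y : St}
    (h : Relation.ReflTransGen (fun a b => a ∈ I ∧ b ∈ I ∧ adj a b) x y) :
    ∀ i j : Fin (m+1), f i = x → f j = y →
      Relation.ReflTransGen (fun a b : ℕ =>
        (∃ i' : Fin (m+1), (i' : ℕ) = a ∧ f i' ∈ I) ∧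
        (∃ j' : Fin (m+1), (j' : ℕ) = b ∧ f j' ∈ I) ∧
        (a + 1 = b ∨ b + 1 = a)) (i : ℕ) (j : ℕ) := by
  induction h with
  | refl =>
      intro i j hi hj
      have : i = j := hf (by rw [hi, hj])
      rw [this]
  | @tail b c hxb hbc ih =>
      intro i j hi hj
      have hbI : b ∈ I := hbc.1
      have hbI' : b ∈ I' := hsub hbI
      rw [him] at hbI'
      obtain ⟨ib, -, hib⟩ := Finset.mem_image.mp hbI'
      refine (ih i ib hi hib).tail ?_
      refine ⟨⟨ib, rfl, by rwa [hib]⟩, ⟨j, rfl, by rw [hj]; exact hbc.2.1⟩, ?_⟩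
      have : adj (f ib) (f j) := by rw [hib, hj]; exact hbc.2.2
      exact (hadj ib j).mp this

lemma cadj_symm (N : ℕ) : Symmetric (cadj N) := fun _ _ h => Or.symm h

lemma cadj_iff (N : ℕ) (a b : ZMod N) : cadj N a b ↔ b = a + 1 ∨ b = a - 1 := by
  unfold cadj
  constructor
  · rintro (h | h)
    · exact Or.inl h
    · right; rw [h]; ring
  · rintro (h | h)
    · exact Or.inl h
    · right; rw [h]; ring

end Aux


section Aux2

lemma precC (N : ℕ) (I I' : Finset (ZMod N))
    (hIp : IsPathOn (cadj N) I) (hI'p : IsPathOn (cadj N) I')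
    (hprec : Prec (cadj N) I I') {t t' : ZMod N} (ht : t ∈ I) (htt' : cadj N t t')
    (ht'I : t' ∉ I) : t' ∈ I' := by
  classical
  obtain ⟨m, f, hf, him, hadj⟩ := hI'p
  obtain ⟨hsub, hnconn⟩ := hprec
  have hIsub : I ⊆ I' := hsub.subset
  set J : Finset (Fin (m+1)) := Finset.univ.filter (fun i => f i ∈ I) with hJ
  have hJmem' : ∀ i : Fin (m+1), i ∈ J ↔ f i ∈ I := by
    intro i; simp [hJ]
  have hJne : J.Nonempty := by
    have htI' : t ∈ I' := hIsub ht
    rw [him] at htI'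
    obtain ⟨r, -, hr⟩ := Finset.mem_image.mp htI'
    exact ⟨r, (hJmem' r).mpr (by rw [hr]; exact ht)⟩
  set p : Fin (m+1) := J.min' hJne with hp
  set q : Fin (m+1) := J.max' hJne with hq
  have hpI : f p ∈ I := (hJmem' p).mp (J.min'_mem hJne)
  have hqI : f q ∈ I := (hJmem' q).mp (J.max'_mem hJne)
  have hqm : (q : ℕ) ≤ m := Nat.le_of_lt_succ q.isLt
  -- interval property
  have hint : ∀ i : Fin (m+1), (p : ℕ) ≤ (i : ℕ) → (i : ℕ) ≤ (q : ℕ) → f i ∈ I := by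
    intro i h1 h2
    have hconnI := connOn_of_path (cadj_symm N) hIp
    have hrtg := hconnI (f p) hpI (f q) hqI
    have hidx := rtg_idx (cadj N) m f hf I' him hadj I hIsub hrtg p q rfl rfl
    have hbet := nat_rtg_between _ hidx ⟨p, rfl, hpI⟩ (i : ℕ) (Or.inl ⟨h1, h2⟩)
    obtain ⟨i', hi', hIi'⟩ := hbet
    have : i' = i := Fin.ext hi'
    rwa [this] at hIi'
  have hJchar : ∀ i : Fin (m+1), f i ∈ I ↔ ((p : ℕ) ≤ (i : ℕ) ∧ (i : ℕ) ≤ (q : ℕ)) := by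
    intro i
    constructor
    · intro h
      have hiJ : i ∈ J := (hJmem' i).mpr h
      exact ⟨J.min'_le i hiJ, J.le_max' i hiJ⟩
    · intro h; exact hint i h.1 h.2
  -- there is an index outside I
  obtain ⟨i₀, hi₀⟩ : ∃ i : Fin (m+1), f i ∉ I := by
    by_contra hcon
    push_neg at hcon
    apply hsub.ne
    apply Finset.Subset.antisymm hIsub
    intro x hx
    rw [him] at hx
    obtain ⟨i, -, rfl⟩ := Finset.mem_image.mp hx
    exact hcon i
  have hkey : 0 < (p : ℕ) ∧ (q : ℕ) < m := by
    by_contra hcon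
    push_neg at hcon
    have hcases : (p : ℕ) = 0 ∨ (q : ℕ) = m := by omega
    rcases hcases with hc | hc
    · -- all of I' \ I is f of indices in (q, m]
      have hq_lt : (q : ℕ) < m := by
        rcases Nat.lt_or_ge (q : ℕ) m with h | h
        · exact h
        · exfalso
          apply hi₀
          exact (hJchar i₀).mpr ⟨by omega, by omega⟩
      apply hnconn
      apply connOn_of_idx (cadj N) (cadj_symm N) m f hadj (I' \ I) ((q : ℕ) + 1) m le_rfl
      · intro i h1 h2
        refine Finset.mem_sdiff.mpr ⟨?_, ?_⟩
        · rw [him]; exact Finset.mem_image_of_mem f (Finset.mem_univ i)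
        · intro hmem
          have := (hJchar i).mp hmem
          omega
      · intro x hx
        rw [Finset.mem_sdiff, him] at hx
        obtain ⟨hx1, hx2⟩ := hx
        obtain ⟨i, -, rfl⟩ := Finset.mem_image.mp hx1
        refine ⟨i, ?_, Nat.le_of_lt_succ i.isLt, rfl⟩
        by_contra hcon2
        push_neg at hcon2
        exact hx2 ((hJchar i).mpr ⟨by omega, by omega⟩)
    · -- all of I' \ I is f of indices in [0, p)
      have hp_pos : 0 < (p : ℕ) := by
        rcases Nat.eq_zero_or_pos (p : ℕ) with h | h
        · exfalso
          apply hi₀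
          exact (hJchar i₀).mpr ⟨by omega, by omega⟩
        · exact h
      apply hnconn
      apply connOn_of_idx (cadj N) (cadj_symm N) m f hadj (I' \ I) 0 ((p : ℕ) - 1)
        (by omega)
      · intro i h1 h2
        refine Finset.mem_sdiff.mpr ⟨?_, ?_⟩
        · rw [him]; exact Finset.mem_image_of_mem f (Finset.mem_univ i)
        · intro hmem
          have := (hJchar i).mp hmem
          omega
      · intro x hx
        rw [Finset.mem_sdiff, him] at hx
        obtain ⟨hx1, hx2⟩ := hx
        obtain ⟨i, -, rfl⟩ := Finset.mem_image.mp hx1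
        refine ⟨i, Nat.zero_le _, ?_, rfl⟩
        by_contra hcon2
        push_neg at hcon2
        exact hx2 ((hJchar i).mpr ⟨by omega, by omega⟩)
  -- now t is an interior vertex
  obtain ⟨r, -, hfr⟩ := Finset.mem_image.mp (by rw [← him]; exact hIsub ht :
    t ∈ Finset.image f Finset.univ)
  have hrJ : f r ∈ I := by rw [hfr]; exact ht
  have hr_bounds : (p : ℕ) ≤ (r : ℕ) ∧ (r : ℕ) ≤ (q : ℕ) := (hJchar r).mp hrJ
  have hr0 : 0 < (r : ℕ) := by omega
  have hrm : (r : ℕ) < m := by omega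
  have hk1 : (r : ℕ) - 1 < m + 1 := by omega
  have hk2 : (r : ℕ) + 1 < m + 1 := by omega
  set i1 : Fin (m+1) := ⟨(r : ℕ) - 1, hk1⟩ with hi1
  set i2 : Fin (m+1) := ⟨(r : ℕ) + 1, hk2⟩ with hi2
  have hm1 : f i1 ∈ I' := by rw [him]; exact Finset.mem_image_of_mem f (Finset.mem_univ i1)
  have hm2 : f i2 ∈ I' := by rw [him]; exact Finset.mem_image_of_mem f (Finset.mem_univ i2)
  have ha1 : cadj N t (f i1) := by
    rw [← hfr]
    exact (hadj r i1).mpr (Or.inr (show ((r : ℕ) - 1) + 1 = (r : ℕ) by omega))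
  have ha2 : cadj N t (f i2) := by
    rw [← hfr]
    exact (hadj r i2).mpr (Or.inl rfl)
  have hne12 : f i1 ≠ f i2 := by
    intro h
    have h2 : (r : ℕ) - 1 = (r : ℕ) + 1 := congrArg Fin.val (hf h)
    omega
  rcases (cadj_iff N t (f i1)).mp ha1 with e1 | e1 <;>
    rcases (cadj_iff N t (f i2)).mp ha2 with e2 | e2 <;>
    rcases (cadj_iff N t t').mp htt' with e3 | e3 <;>
    first
    | exact absurd (e1.trans e2.symm) hne12
    | (rw [e3, ← e1]; exact hm1)
    | (rw [e3, ← e2]; exact hm2)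

lemma pair_card_cases {N : ℕ} {t t' : ZMod N} (htne : t ≠ t') (I : Finset (ZMod N)) :
    (I ∩ ({t, t'} : Finset (ZMod N))).card =
      (if t ∈ I then 1 else 0) + (if t' ∈ I then 1 else 0) := by
  classical
  have h : I ∩ ({t, t'} : Finset (ZMod N)) = ({t, t'} : Finset (ZMod N)).filter (· ∈ I) := by
    ext x
    simp [Finset.mem_inter, Finset.mem_filter, and_comm]
  rw [h]
  rw [show ({t, t'} : Finset (ZMod N)) = insert t {t'} from rfl]
  rw [Finset.filter_insert, Finset.filter_singleton]
  split_ifs with h1 h2 h2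
  · rw [Finset.card_insert_of_notMem (by simp [htne]), Finset.card_singleton]
  · simp
  · simp
  · simp

lemma Tsucc (n : ℕ) : ((n * (n + 1) / 2 : ℕ) : ZMod 2) + (((n + 1) * (n + 1 + 1) / 2 : ℕ) : ZMod 2)
    = (n : ZMod 2) + 1 := by
  obtain ⟨a, ha⟩ := Nat.even_mul_succ_self n
  obtain ⟨b, hb⟩ := Nat.even_mul_succ_self (n + 1)
  have key : n * (n + 1) + (n + 1) * (n + 1 + 1) = 2 * ((n + 1) * (n + 1)) := by ring
  have h1 : n * (n + 1) / 2 = a := by rw [ha]; omega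
  have h2 : (n + 1) * (n + 1 + 1) / 2 = b := by rw [hb]; omega
  rw [ha, hb] at key
  have h3 : a + b = (n + 1) * (n + 1) := by
    generalize (n + 1) * (n + 1) = M at key
    omega
  rw [h1, h2, ← Nat.cast_add, h3]
  push_cast
  have hx : ∀ x : ZMod 2, x * x = x := by decide
  rw [hx]

lemma singleton_unique (N : ℕ) {t t' : ZMod N} (htne : t ≠ t') (htt' : cadj N t t')
    (Bt : Finset (Finset (ZMod N))) (hBt : Bt ∈ phiSet (cadj N))
    (I I' : Finset (ZMod N)) (hI : I ∈ Bt) (hI' : I' ∈ Bt)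
    (h1 : (I ∩ ({t, t'} : Finset (ZMod N))).card = 1)
    (h1' : (I' ∩ ({t, t'} : Finset (ZMod N))).card = 1) : I = I' := by
  obtain ⟨hcal, hP0, -⟩ := hBt
  have ht't : cadj N t' t := Or.symm htt'
  have key : ∀ J J' : Finset (ZMod N), J ∈ Bt → J' ∈ Bt → Prec (cadj N) J J' →
      (J ∩ ({t, t'} : Finset (ZMod N))).card = 1 →
      (t ∈ J' ∧ t' ∈ J') := by
    intro J J' hJ hJ' hprec hc
    obtain ⟨s, hs⟩ := Finset.card_eq_one.mp hc
    have hsmem : s ∈ J ∩ ({t, t'} : Finset (ZMod N)) := by rw [hs]; exact Finset.mem_singleton_self s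
    obtain ⟨hsJ, hsee⟩ := Finset.mem_inter.mp hsmem
    have hJsub : J ⊆ J' := hprec.1.subset
    rcases Finset.mem_insert.mp hsee with hst | hst
    · -- s = t
      subst hst
      have ht'J : t' ∉ J := by
        intro hmem
        have : t' ∈ J ∩ ({s, t'} : Finset (ZMod N)) :=
          Finset.mem_inter.mpr ⟨hmem, Finset.mem_insert_of_mem (Finset.mem_singleton_self t')⟩
        rw [hs] at this
        exact htne (Finset.mem_singleton.mp this).symm
      exact ⟨hJsub hsJ, precC N J J' (hcal J hJ).1 (hcal J' hJ').1 hprec hsJ htt' ht'J⟩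
    · -- s = t'
      have hst' : s = t' := Finset.mem_singleton.mp hst
      subst hst'
      have htJ : t ∉ J := by
        intro hmem
        have : t ∈ J ∩ ({t, s} : Finset (ZMod N)) :=
          Finset.mem_inter.mpr ⟨hmem, Finset.mem_insert_self t _⟩
        rw [hs] at this
        exact htne (Finset.mem_singleton.mp this)
      exact ⟨precC N J J' (hcal J hJ).1 (hcal J' hJ').1 hprec hsJ ht't htJ, hJsub hsJ⟩
  have card2 : ∀ J : Finset (ZMod N), t ∈ J → t' ∈ J →
      (J ∩ ({t, t'} : Finset (ZMod N))).card = 2 := by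
    intro J h1 h2
    have hsub : ({t, t'} : Finset (ZMod N)) ⊆ J := by
      intro x hx
      rcases Finset.mem_insert.mp hx with h | h
      · rw [h]; exact h1
      · rw [Finset.mem_singleton.mp h]; exact h2
    rw [Finset.inter_eq_right.mpr hsub, Finset.card_pair htne]
  rcases hP0 I hI I' hI' with h | h | h | h
  · exact h
  · -- Spade: impossible
    exfalso
    obtain ⟨hdisj, hnconn⟩ := h
    obtain ⟨s, hs⟩ := Finset.card_eq_one.mp h1
    obtain ⟨s', hs'⟩ := Finset.card_eq_one.mp h1'
    have hsmem : s ∈ I ∩ ({t, t'} : Finset (ZMod N)) := by rw [hs]; exact Finset.mem_singleton_self s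
    have hs'mem : s' ∈ I' ∩ ({t, t'} : Finset (ZMod N)) := by
      rw [hs']; exact Finset.mem_singleton_self s'
    obtain ⟨hsI, hsee⟩ := Finset.mem_inter.mp hsmem
    obtain ⟨hs'I', hs'ee⟩ := Finset.mem_inter.mp hs'mem
    have hne : s ≠ s' := by
      rintro rfl
      have : s ∈ I ∩ I' := Finset.mem_inter.mpr ⟨hsI, hs'I'⟩
      rw [hdisj] at this
      exact absurd this (Finset.notMem_empty s)
    have hadj2 : cadj N s s' := by
      rcases Finset.mem_insert.mp hsee with h | h <;>
        rcases Finset.mem_insert.mp hs'ee with h' | h'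
      · exact absurd (h.trans h'.symm) hne
      · rw [h, Finset.mem_singleton.mp h']; exact htt'
      · rw [Finset.mem_singleton.mp h, h']; exact ht't
      · exact absurd ((Finset.mem_singleton.mp h).trans (Finset.mem_singleton.mp h').symm) hne
    apply hnconn
    exact connOn_union (connOn_of_path (cadj_symm N) (hcal I hI).1)
      (connOn_of_path (cadj_symm N) (hcal I' hI').1) hsI hs'I' hadj2 (Or.symm hadj2)
  · exfalso
    obtain ⟨h1t, h2t⟩ := key I I' hI hI' h h1
    rw [card2 I' h1t h2t] at h1'
    omega
  · exfalso
    obtain ⟨h1t, h2t⟩ := key I' I hI' hI h h1'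
    rw [card2 I h1t h2t] at h1
    omega

end Aux2

/-- for `B ∈ omega(Vbar)`: `z_ee('eps(B)) = 0` iff `|I ∩ ee| ∈ {0,2}`
for every `I ∈ B`. -/
theorem statement19 (N : ℕ) [NeZero N] (hN : 3 ≤ N) (hodd : Odd N)
    (t t' : ZMod N) (hadj : cadj N t t')
    (B : Finset (Finset (ZMod N))) (hB : B ∈ omegaSet (cadj N) ({t, t'} : Finset (ZMod N))) :
    (zee N t t' (epsO (cadj N) ({t, t'} : Finset (ZMod N)) (ebar N) B) = 0 ↔
      ∀ I ∈ B, (I ∩ ({t, t'} : Finset (ZMod N))).card = 0 ∨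
        (I ∩ ({t, t'} : Finset (ZMod N))).card = 2) := by
  classical
  haveI : Fact (1 < N) := ⟨by omega⟩
  have htne : t ≠ t' := by
    rintro rfl
    rcases hadj with h | h <;>
    · have h1 : (1 : ZMod N) = 0 := by
        have := congrArg (fun x => x - t) h
        simpa using this.symm
      exact one_ne_zero h1
  -- identify Btilde
  have hex : ∃ B' ∈ phiSet (cadj N), bangF ({t, t'} : Finset (ZMod N)) B' = B := hB
  have htil : (tildeF (cadj N) ({t, t'} : Finset (ZMod N)) B) ∈ phiSet (cadj N) ∧
      bangF ({t, t'} : Finset (ZMod N)) (tildeF (cadj N) ({t, t'} : Finset (ZMod N)) B) = B := by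
    unfold tildeF
    rw [dif_pos hex]
    exact hex.choose_spec
  set Bt := tildeF (cadj N) ({t, t'} : Finset (ZMod N)) B with hBtdef
  obtain ⟨hBt1, hBt2⟩ := htil
  have hgoal1 : epsO (cadj N) ({t, t'} : Finset (ZMod N)) (ebar N) B = epsB (ebar N) Bt := rfl
  rw [hgoal1]
  -- compute zee on epsB
  have hzee_ebar : ∀ s : ZMod N, zee N t t' (ebar N s) =
      (if t = s then (1 : ZMod 2) else 0) + (if t' = s then 1 else 0) := by
    intro s
    have h0 : zee N t t' (ebar N s) = eVec N s t + eVec N s t' := rfl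
    rw [h0]
    simp only [eVec, Pi.single_apply]
  have hzval : zee N t t' (epsB (ebar N) Bt) =
      ((gs Bt t * (gs Bt t + 1) / 2 : ℕ) : ZMod 2) +
      ((gs Bt t' * (gs Bt t' + 1) / 2 : ℕ) : ZMod 2) := by
    unfold epsB
    rw [map_sum]
    simp_rw [map_smul, hzee_ebar, smul_eq_mul, mul_add]
    rw [Finset.sum_add_distrib]
    simp [mul_ite, mul_one, mul_zero, Finset.sum_ite_eq]
  rw [hzval]
  -- counting
  set n : ℕ := nB ({t, t'} : Finset (ZMod N)) Bt with hndef
  set u : ℕ := (Bt.filter (fun I => t ∈ I ∧ t' ∉ I)).card with hudef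
  set v : ℕ := (Bt.filter (fun I => t' ∈ I ∧ t ∉ I)).card with hvdef
  have hn : n = (Bt.filter (fun I => t ∈ I ∧ t' ∈ I)).card := by
    rw [hndef]
    unfold nB
    congr 1
    ext I
    simp [Finset.insert_subset_iff]
  have hn' : n = (Bt.filter (fun I => t' ∈ I ∧ t ∈ I)).card := by
    rw [hn]
    congr 1
    ext I
    simp [Finset.mem_filter, and_comm]
  have hgt : gs Bt t = n + u := by
    have hsplit := Finset.card_filter_add_card_filter_not
      (s := Bt.filter (fun I => t ∈ I)) (p := fun I => t' ∈ I)
    rw [Finset.filter_filter, Finset.filter_filter] at hsplit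
    have : gs Bt t = (Bt.filter (fun I => t ∈ I)).card := rfl
    rw [this, ← hsplit, ← hn]
  have hgt' : gs Bt t' = n + v := by
    have hsplit := Finset.card_filter_add_card_filter_not
      (s := Bt.filter (fun I => t' ∈ I)) (p := fun I => t ∈ I)
    rw [Finset.filter_filter, Finset.filter_filter] at hsplit
    have : gs Bt t' = (Bt.filter (fun I => t' ∈ I)).card := rfl
    rw [this, ← hsplit, ← hn']
  -- cardinality helpers
  have hcard1 : ∀ I : Finset (ZMod N), ((I ∩ ({t, t'} : Finset (ZMod N))).card = 1 ↔
      ((t ∈ I ∧ t' ∉ I) ∨ (t' ∈ I ∧ t ∉ I))) := by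
    intro I
    rw [pair_card_cases htne I]
    split_ifs with hA hB' hB' <;> simp [hA, hB']
  have hle2 : ∀ I : Finset (ZMod N), (I ∩ ({t, t'} : Finset (ZMod N))).card ≤ 2 := by
    intro I
    rw [pair_card_cases htne I]
    split_ifs <;> omega
  -- Dsing
  set Dsing : Finset (Finset (ZMod N)) :=
    Bt.filter (fun I => (I ∩ ({t, t'} : Finset (ZMod N))).card = 1) with hDdef
  have hDeq : Dsing = (Bt.filter (fun I => t ∈ I ∧ t' ∉ I)) ∪
      (Bt.filter (fun I => t' ∈ I ∧ t ∉ I)) := by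
    rw [hDdef]
    ext I
    simp only [Finset.mem_filter, Finset.mem_union]
    constructor
    · rintro ⟨hI, h1⟩
      rcases (hcard1 I).mp h1 with h | h
      · exact Or.inl ⟨hI, h⟩
      · exact Or.inr ⟨hI, h⟩
    · rintro (⟨hI, h⟩ | ⟨hI, h⟩)
      · exact ⟨hI, (hcard1 I).mpr (Or.inl h)⟩
      · exact ⟨hI, (hcard1 I).mpr (Or.inr h)⟩
  have hDdisj : Disjoint (Bt.filter (fun I => t ∈ I ∧ t' ∉ I))
      (Bt.filter (fun I => t' ∈ I ∧ t ∉ I)) := by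
    rw [Finset.disjoint_left]
    intro I hIa hIb
    have ha := (Finset.mem_filter.mp hIa).2
    have hb := (Finset.mem_filter.mp hIb).2
    exact ha.2 hb.1
  have hDcard : Dsing.card = u + v := by
    rw [hDeq, Finset.card_union_of_disjoint hDdisj]
  have hDle1 : Dsing.card ≤ 1 := by
    apply Finset.card_le_one.mpr
    intro I hI I' hI'
    have h1 := Finset.mem_filter.mp hI
    have h2 := Finset.mem_filter.mp hI'
    exact singleton_unique N htne hadj Bt hBt1 I I' h1.1 h2.1 h1.2 h2.2
  have hxx : ∀ x : ZMod 2, x + x = 0 := by decide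
  rcases (show Dsing.card = 0 ∨ Dsing.card = 1 by omega) with hD0 | hD1
  · -- no singleton set at all
    have hu : u = 0 := by omega
    have hv : v = 0 := by omega
    have hDempty : Dsing = ∅ := Finset.card_eq_zero.mp hD0
    have hBB : B = Bt := by
      rw [← hBt2]
      unfold bangF
      rw [dif_neg]
      rintro ⟨-, I, hI, hcardI⟩
      have : I ∈ Dsing := Finset.mem_filter.mpr ⟨hI, hcardI⟩
      rw [hDempty] at this
      exact absurd this (Finset.notMem_empty I)
    have hlhs : ((gs Bt t * (gs Bt t + 1) / 2 : ℕ) : ZMod 2) +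
        ((gs Bt t' * (gs Bt t' + 1) / 2 : ℕ) : ZMod 2) = 0 := by
      rw [hgt, hgt', hu, hv, Nat.add_zero]
      exact hxx _
    refine iff_of_true hlhs ?_
    intro I hI
    rw [hBB] at hI
    have h2 := hle2 I
    have h1 : (I ∩ ({t, t'} : Finset (ZMod N))).card ≠ 1 := by
      intro hc
      have : I ∈ Dsing := Finset.mem_filter.mpr ⟨hI, hc⟩
      rw [hDempty] at this
      exact absurd this (Finset.notMem_empty I)
    omega
  · -- exactly one singleton set I₀
    obtain ⟨I₀, hI₀eq⟩ := Finset.card_eq_one.mp hD1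
    have hI₀mem : I₀ ∈ Dsing := by rw [hI₀eq]; exact Finset.mem_singleton_self I₀
    obtain ⟨hI₀Bt, hI₀card⟩ := Finset.mem_filter.mp hI₀mem
    have huniq : ∀ I ∈ Bt, (I ∩ ({t, t'} : Finset (ZMod N))).card = 1 → I = I₀ := by
      intro I hI hc
      have : I ∈ Dsing := Finset.mem_filter.mpr ⟨hI, hc⟩
      rw [hI₀eq] at this
      exact Finset.mem_singleton.mp this
    have huv : u + v = 1 := by omega
    have hzv : ((gs Bt t * (gs Bt t + 1) / 2 : ℕ) : ZMod 2) +
        ((gs Bt t' * (gs Bt t' + 1) / 2 : ℕ) : ZMod 2) = (n : ZMod 2) + 1 := by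
      rcases (show (u = 1 ∧ v = 0) ∨ (u = 0 ∧ v = 1) by omega) with ⟨hu, hv⟩ | ⟨hu, hv⟩
      · rw [hgt, hgt', hu, hv, Nat.add_zero, add_comm]
        exact Tsucc n
      · rw [hgt, hgt', hu, hv, Nat.add_zero]
        exact Tsucc n
    rw [hzv]
    rcases Nat.even_or_odd n with hev | hod
    · -- n even: B = Bt contains the singleton, both sides false
      have hcast : (n : ZMod 2) = 0 := by
        have hm : n % 2 = 0 := Nat.even_iff.mp hev
        rw [← ZMod.natCast_mod n 2, hm, Nat.cast_zero]
      have hBB : B = Bt := by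
        rw [← hBt2]
        unfold bangF
        rw [dif_neg]
        rintro ⟨ho, -⟩
        rw [← hndef] at ho
        exact (Nat.not_odd_iff_even.mpr hev) ho
      refine iff_of_false ?_ ?_
      · rw [hcast]
        decide
      · intro hcon
        have := hcon I₀ (by rw [hBB]; exact hI₀Bt)
        omega
    · -- n odd: singleton removed, both sides true
      have hcast : (n : ZMod 2) = 1 := by
        have hm : n % 2 = 1 := Nat.odd_iff.mp hod
        rw [← ZMod.natCast_mod n 2, hm, Nat.cast_one]
      have hcond : Odd (nB ({t, t'} : Finset (ZMod N)) Bt) ∧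
          ∃ I ∈ Bt, (I ∩ ({t, t'} : Finset (ZMod N))).card = 1 := by
        refine ⟨by rw [← hndef]; exact hod, I₀, hI₀Bt, hI₀card⟩
      have hBB : B = Bt.erase hcond.2.choose := by
        rw [← hBt2]
        unfold bangF
        rw [dif_pos hcond]
      have hcspec := hcond.2.choose_spec
      have hcI₀ : hcond.2.choose = I₀ := huniq _ hcspec.1 hcspec.2
      refine iff_of_true ?_ ?_
      · rw [hcast]
        decide
      · intro I hI
        rw [hBB, hcI₀] at hI
        obtain ⟨hIne, hIBt⟩ := Finset.mem_erase.mp hI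
        have h2 := hle2 I
        have h1 : (I ∩ ({t, t'} : Finset (ZMod N))).card ≠ 1 := by
          intro hc
          exact hIne (huniq I hIBt hc)
        omega
end
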